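/- arXiv:1506.03508 — 5 statements merged into one kernel-verified Lean document; each statement's English description precedes it below -/
import Mathlib

section
/- (Fundamental theorem of P-partitions.) Every P-partition σ belongs to A(π) for exactly one linear extension π ∈ L(P); moreover, for every π ∈ L(P), every element of A(π) is a P-partition. Hence the set of P-partitions is the disjoint union of the sets A(π) over π ∈ L(P). -/
open scoped Classical

/-- A `P`-partition for the partial order `P` on `Fin p` (elements serve as their own
labels, via the canonical identification of `Fin p` with `[p] = {1,…,p}`):
`σ j ≤ σ i` whenever `i ≺ j`, and moreover `σ j < σ i` whenever `i ≺ j` and `i > j`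
as integers. -/
def IsPPartition (p : ℕ) (P : PartialOrder (Fin p)) (σ : Fin p → ℕ) : Prop :=
  ∀ i j : Fin p, P.lt i j → σ j ≤ σ i ∧ (j < i → σ j < σ i)

/-- `π` is a linear extension of `P`: a bijection of `[p]` such that
`π i ≺ π j` implies `i < j`. -/
def IsLinExt (p : ℕ) (P : PartialOrder (Fin p)) (π : Equiv.Perm (Fin p)) : Prop :=
  ∀ i j : Fin p, P.lt (π i) (π j) → i < j

/-- `σ ∈ 𝒜(π)` : `σ (π 1) ≥ σ (π 2) ≥ ⋯ ≥ σ (π p)`, with strict inequality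
`σ (π i) > σ (π (i+1))` whenever `π i > π (i+1)` as integers. -/
def MemA (p : ℕ) (π : Equiv.Perm (Fin p)) (σ : Fin p → ℕ) : Prop :=
  ∀ i j : Fin p, (i : ℕ) + 1 = (j : ℕ) →
    σ (π j) ≤ σ (π i) ∧ (π j < π i → σ (π j) < σ (π i))

private lemma chain_le {p : ℕ} (f : Fin p → ℕ) (lo hi : Fin p)
    (h : ∀ k l : Fin p, lo ≤ k → l ≤ hi → (k : ℕ) + 1 = (l : ℕ) → f l ≤ f k) :
    ∀ n : ℕ, ∀ i j : Fin p, (j : ℕ) = (i : ℕ) + n → lo ≤ i → j ≤ hi → f j ≤ f i := by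
  intro n
  induction n with
  | zero =>
    intro i j hij _ _
    have : i = j := Fin.ext (by omega)
    rw [this]
  | succ n ih =>
    intro i j hij hlo hhi
    have hk : (i : ℕ) + n < p := by omega
    set k : Fin p := ⟨(i : ℕ) + n, hk⟩ with hkdef
    have hik : i ≤ k := by simp [Fin.le_def, hkdef]
    have hkj : k ≤ j := by simp [Fin.le_def, hkdef]; omega
    have h1 : f j ≤ f k := h k j (le_trans hlo hik) hhi (by simp [hkdef]; omega)
    have h2 : f k ≤ f i := ih i k (by simp [hkdef]) hlo (le_trans hkj hhi)
    exact le_trans h1 h2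

private lemma chain_lt {p : ℕ} (f : Fin p → ℕ) (lo hi : Fin p)
    (h : ∀ k l : Fin p, lo ≤ k → l ≤ hi → (k : ℕ) + 1 = (l : ℕ) → f k < f l) :
    ∀ n : ℕ, ∀ i j : Fin p, (j : ℕ) = (i : ℕ) + n + 1 → lo ≤ i → j ≤ hi → f i < f j := by
  intro n
  induction n with
  | zero =>
    intro i j hij hlo hhi
    exact h i j hlo hhi (by omega)
  | succ n ih =>
    intro i j hij hlo hhi
    have hk : (i : ℕ) + n + 1 < p := by omega
    set k : Fin p := ⟨(i : ℕ) + n + 1, hk⟩ with hkdef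
    have hik : i ≤ k := by simp [Fin.le_def, hkdef]; omega
    have hkj : k ≤ j := by simp [Fin.le_def, hkdef]; omega
    have h1 : f i < f k := ih i k (by simp [hkdef]) hlo (le_trans hkj hhi)
    have h2 : f k < f j := h k j (le_trans hlo hik) hhi (by simp [hkdef]; omega)
    exact lt_trans h1 h2

/-- **Fundamental theorem of `P`-partitions** : every `P`-partition lies in `𝒜(π)` for
exactly one linear extension `π ∈ L(P)`, and conversely every member of `𝒜(π)` for
`π ∈ L(P)` is a `P`-partition; hence the set of `P`-partitions is the disjoint union
of the `𝒜(π)`, `π ∈ L(P)`. -/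
theorem fundamental_theorem_of_P_partitions (p : ℕ) (hp : 0 < p)
    (P : PartialOrder (Fin p)) :
    (∀ σ : Fin p → ℕ, IsPPartition p P σ →
        ∃! π : Equiv.Perm (Fin p), IsLinExt p P π ∧ MemA p π σ) ∧
    (∀ π : Equiv.Perm (Fin p), IsLinExt p P π →
        ∀ σ : Fin p → ℕ, MemA p π σ → IsPPartition p P σ) := by
  have hirr : ∀ a : Fin p, ¬ P.lt a a := fun a h =>
    ((P.lt_iff_le_not_ge _ _).1 h).2 ((P.lt_iff_le_not_ge _ _).1 h).1
  constructor
  · -- existence and uniqueness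
    intro σ hσ
    set f : Fin p → ℕᵒᵈ := fun i => OrderDual.toDual (σ i) with hf
    set π := Tuple.sort f with hπ
    obtain ⟨hmono, htie⟩ := (Tuple.eq_sort_iff).1 hπ
    have hM : ∀ i j : Fin p, (i : ℕ) ≤ (j : ℕ) → σ (π j) ≤ σ (π i) := by
      intro i j h
      exact hmono (Fin.le_def.mpr h)
    have hT : ∀ i j : Fin p, (i : ℕ) < (j : ℕ) → σ (π i) = σ (π j) →
        ((π i : Fin p) : ℕ) < ((π j : Fin p) : ℕ) := by
      intro i j h he
      exact Fin.lt_def.mp (htie i j (Fin.lt_def.mpr h) (congrArg OrderDual.toDual he))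
    have hlin : IsLinExt p P π := by
      intro a b hab
      rcases Nat.lt_trichotomy (a : ℕ) (b : ℕ) with h | h | h
      · exact Fin.lt_def.mpr h
      · have : a = b := Fin.ext h
        subst this
        exact absurd hab (hirr _)
      · exfalso
        have h1 : σ (π a) ≤ σ (π b) := hM b a (Nat.le_of_lt h)
        have h2 : σ (π b) ≤ σ (π a) := (hσ _ _ hab).1
        have he : σ (π b) = σ (π a) := by omega
        have h3 := hT b a h he
        have h4 : π b < π a := Fin.lt_def.mpr h3
        have h5 := (hσ _ _ hab).2 h4
        clear hab h4
        omega
    have hmem : MemA p π σ := by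
      intro i j hij
      have hle := hM i j (by omega)
      refine ⟨hle, fun hlt => ?_⟩
      have h2 := Fin.lt_def.mp hlt
      clear hlt
      rcases Nat.lt_or_ge (σ (π j)) (σ (π i)) with h | h
      · exact h
      · exfalso
        have he : σ (π i) = σ (π j) := by omega
        have h1 := hT i j (by omega) he
        omega
    refine ⟨π, ⟨hlin, hmem⟩, ?_⟩
    -- uniqueness
    rintro π' ⟨hlin', hmem'⟩
    rw [hπ]
    apply Tuple.eq_sort_iff.2
    have hM' : ∀ i j : Fin p, (i : ℕ) ≤ (j : ℕ) → σ (π' j) ≤ σ (π' i) := by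
      intro i j h
      exact chain_le (fun k => σ (π' k)) i j
        (fun k l _ _ hkl => (hmem' k l hkl).1) ((j : ℕ) - (i : ℕ)) i j
        (by omega) (Fin.le_def.mpr (by omega)) (Fin.le_def.mpr (by omega))
    constructor
    · intro i j h
      exact hM' i j (Fin.le_def.mp h)
    · intro i j hij he
      have hij' : (i : ℕ) < (j : ℕ) := Fin.lt_def.mp hij
      clear hij
      have he' : σ (π' i) = σ (π' j) := OrderDual.toDual.injective he
      have hsq : ∀ k : Fin p, (i : ℕ) ≤ (k : ℕ) → (k : ℕ) ≤ (j : ℕ) →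
          σ (π' k) = σ (π' i) := by
        intro k h1 h2
        have a1 := hM' i k h1
        have a2 := hM' k j h2
        omega
      have key : ((π' i : Fin p) : ℕ) < ((π' j : Fin p) : ℕ) := by
        refine chain_lt (fun k => ((π' k : Fin p) : ℕ)) i j ?_
          ((j : ℕ) - (i : ℕ) - 1) i j (by omega)
          (Fin.le_def.mpr (by omega)) (Fin.le_def.mpr (by omega))
        intro k l hk hl hkl
        have hk' := Fin.le_def.mp hk
        have hl' := Fin.le_def.mp hl
        clear hk hl
        rcases Nat.lt_trichotomy ((π' k : Fin p) : ℕ) ((π' l : Fin p) : ℕ) with h | h | h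
        · exact h
        · exfalso
          have : π' k = π' l := Fin.ext h
          have : k = l := π'.injective this
          have : (k : ℕ) = (l : ℕ) := congrArg Fin.val this
          omega
        · exfalso
          have hd := (hmem' k l hkl).2 (Fin.lt_def.mpr h)
          have e1 := hsq k hk' (by omega)
          have e2 := hsq l (by omega) hl'
          omega
      exact Fin.lt_def.mpr key
  · -- converse
    intro π hlin σ hA i j hij
    set a := π.symm i with ha
    set b := π.symm j with hb
    have hia : π a = i := π.apply_symm_apply i
    have hjb : π b = j := π.apply_symm_apply j
    have hab : a < b := hlin a b (by rw [hia, hjb]; exact hij)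
    have hab' : (a : ℕ) < (b : ℕ) := Fin.lt_def.mp hab
    clear hab hij
    have hM' : ∀ k l : Fin p, (k : ℕ) ≤ (l : ℕ) → σ (π l) ≤ σ (π k) := by
      intro k l h
      exact chain_le (fun m => σ (π m)) k l
        (fun m n _ _ hmn => (hA m n hmn).1) ((l : ℕ) - (k : ℕ)) k l
        (by omega) (Fin.le_def.mpr (by omega)) (Fin.le_def.mpr (by omega))
    have hle : σ j ≤ σ i := by
      have := hM' a b (Nat.le_of_lt hab')
      rwa [hia, hjb] at this
    refine ⟨hle, fun hji => ?_⟩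
    have hji' : (j : ℕ) < (i : ℕ) := Fin.lt_def.mp hji
    clear hji
    by_contra hcon
    have he : σ j = σ i := by omega
    have hsq : ∀ k : Fin p, (a : ℕ) ≤ (k : ℕ) → (k : ℕ) ≤ (b : ℕ) →
        σ (π k) = σ i := by
      intro k h1 h2
      have a1 := hM' a k h1
      have a2 := hM' k b h2
      rw [hia] at a1
      rw [hjb] at a2
      omega
    have key : ((π a : Fin p) : ℕ) < ((π b : Fin p) : ℕ) := by
      refine chain_lt (fun k => ((π k : Fin p) : ℕ)) a b ?_
        ((b : ℕ) - (a : ℕ) - 1) a b (by omega)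
        (Fin.le_def.mpr (by omega)) (Fin.le_def.mpr (by omega))
      intro k l hk hl hkl
      have hk' := Fin.le_def.mp hk
      have hl' := Fin.le_def.mp hl
      clear hk hl
      rcases Nat.lt_trichotomy ((π k : Fin p) : ℕ) ((π l : Fin p) : ℕ) with h | h | h
      · exact h
      · exfalso
        have : π k = π l := Fin.ext h
        have : k = l := π.injective this
        have : (k : ℕ) = (l : ℕ) := congrArg Fin.val this
        omega
      · exfalso
        have hd := (hA k l hkl).2 (Fin.lt_def.mpr h)
        have e1 := hsq k hk' (by omega)
        have e2 := hsq l (by omega) hl'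
        omega
    rw [hia, hjb] at key
    omega
end

section
/- In the ring of formal power series in t with coefficients in ℤ[q], the identity (∏_{i=0}^{p} (1 − t q^i)) · ∑_{m≥0} U_m(P) t^m = ∑_{π ∈ L(P)} q^{maj(π)} t^{des(π)} holds, where U_m(P) ∈ ℤ[q] is the polynomial ∑_σ q^{σ(1)+⋯+σ(p)}, the sum being over all P-partitions σ whose values are all at most m. -/
open scoped Classical

/-- The descent set of the word `f 1, f 2, …, f p` (1-based positions, so that
position `i ∈ [p-1]` is a descent iff the `i`-th letter exceeds the `(i+1)`-st). -/
def desSet (p : ℕ) (f : Fin p → ℕ) : Finset ℕ :=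
  (Finset.Ico 1 p).filter fun i =>
    ∃ (h1 : i - 1 < p) (h2 : i < p), f ⟨i, h2⟩ < f ⟨i - 1, h1⟩

/-- `U_m(P) ∈ ℤ[q]` : the sum of `q^{σ(1)+⋯+σ(p)}` over all `P`-partitions `σ`
with all values at most `m`. -/
noncomputable def Upoly (p : ℕ) (P : PartialOrder (Fin p)) (m : ℕ) : Polynomial ℤ :=
  ∑ σ ∈ Finset.univ.filter
      (fun σ : Fin p → Fin (m + 1) => IsPPartition p P fun i => (σ i : ℕ)),
    Polynomial.X ^ (∑ i, (σ i : ℕ))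

noncomputable section

/-- Box of ℕ-valued tuples with entries ≤ m. -/
def boxFun (p m : ℕ) : Finset (Fin p → ℕ) := Fintype.piFinset fun _ => Finset.range (m+1)

lemma mem_boxFun {p m : ℕ} {f : Fin p → ℕ} : f ∈ boxFun p m ↔ ∀ i, f i ≤ m := by
  simp [boxFun, Nat.lt_succ_iff]

/-- adjacent-antitone predicate -/
def AdjAnti (p : ℕ) (f : Fin p → ℕ) : Prop :=
  ∀ k : ℕ, ∀ h : k + 1 < p, f ⟨k+1, h⟩ ≤ f ⟨k, by omega⟩

lemma anti_of_adj {p : ℕ} {f : Fin p → ℕ} (h : AdjAnti p f) :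
    ∀ a b : ℕ, ∀ (hab : a ≤ b) (hb : b < p), f ⟨b, hb⟩ ≤ f ⟨a, by omega⟩ := by
  intro a b hab
  induction b with
  | zero => intro hb; interval_cases a; simp
  | succ n ih =>
    intro hb
    rcases Nat.eq_or_lt_of_le hab with h1 | h1
    · subst h1; simp
    · exact le_trans (h n hb) (ih (by omega) (by omega))

def Gpoly (p m : ℕ) : Polynomial ℤ :=
  ∑ σ ∈ (boxFun p m).filter (AdjAnti p), Polynomial.X ^ (∑ i, σ i)

def Compat (p : ℕ) (S : Finset ℕ) (f : Fin p → ℕ) : Prop :=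
  ∀ k : ℕ, ∀ h : k + 1 < p,
    f ⟨k+1, h⟩ ≤ f ⟨k, by omega⟩ ∧ (k+1 ∈ S → f ⟨k+1, h⟩ < f ⟨k, by omega⟩)

def Fpoly (p : ℕ) (S : Finset ℕ) (m : ℕ) : Polynomial ℤ :=
  ∑ f ∈ (boxFun p m).filter (Compat p S), Polynomial.X ^ (∑ i, f i)

lemma Gpoly_zero (m : ℕ) : Gpoly 0 m = 1 := by
  rw [Gpoly]
  rw [show (boxFun 0 m).filter (AdjAnti 0) = {![]} from by
    ext f; simp [mem_boxFun, AdjAnti, Subsingleton.elim f ![]]]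
  simp

lemma Gpoly_m_zero (p : ℕ) : Gpoly p 0 = 1 := by
  rw [Gpoly]
  rw [show (boxFun p 0).filter (AdjAnti p) = {fun _ => 0} from by
    ext f
    simp only [Finset.mem_filter, mem_boxFun, Finset.mem_singleton]
    constructor
    · rintro ⟨h1, _⟩; funext i; exact Nat.le_zero.mp (h1 i)
    · rintro rfl; exact ⟨fun i => le_refl 0, fun k h => le_refl 0⟩]
  simp

lemma Gpoly_rec (p m : ℕ) :
    Gpoly (p+1) (m+1) = Gpoly p (m+1) + Polynomial.X ^ (p+1) * Gpoly (p+1) m := by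
  classical
  rw [Gpoly]
  rw [← Finset.sum_filter_add_sum_filter_not _ (fun σ => σ (Fin.last p) = 0)]
  congr 1
  · -- last entry is 0 ↔ drop it
    rw [Gpoly]
    refine Finset.sum_nbij' (fun σ => fun i : Fin p => σ ⟨i, by omega⟩)
      (fun τ => fun j : Fin (p+1) => if h : (j : ℕ) < p then τ ⟨j, h⟩ else 0)
      ?_ ?_ ?_ ?_ ?_
    · intro σ hσ
      simp only [Finset.mem_filter, mem_boxFun] at hσ ⊢
      exact ⟨fun i => hσ.1.1 _, fun k h => hσ.1.2 k (by omega)⟩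
    · intro τ hτ
      simp only [Finset.mem_filter, mem_boxFun] at hτ ⊢
      refine ⟨⟨fun j => ?_, fun k h => ?_⟩, ?_⟩
      · split <;> simp [hτ.1 _]
      · show (if h2 : (k+1) < p then τ ⟨k+1, h2⟩ else 0) ≤
          (if h2 : k < p then τ ⟨k, h2⟩ else 0)
        rcases Nat.lt_or_ge (k+1) p with h2 | h2
        · rw [dif_pos h2, dif_pos (by omega)]
          exact hτ.2 k h2
        · rw [dif_neg (by omega)]
          exact Nat.zero_le _
      · show (if h2 : p < p then τ ⟨p, h2⟩ else 0) = 0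
        rw [dif_neg (by omega)]
    · intro σ hσ
      simp only [Finset.mem_filter, mem_boxFun] at hσ
      funext j
      show (if h : (j:ℕ) < p then σ ⟨(j:ℕ), by omega⟩ else 0) = σ j
      split
      · rfl
      · have : j = Fin.last p := by
          apply Fin.ext; simp only [Fin.val_last]; omega
        rw [this, hσ.2]
    · intro τ hτ
      funext i
      show (if h : (i:ℕ) < p then τ ⟨(i:ℕ), h⟩ else 0) = τ i
      rw [dif_pos i.isLt]
    · intro σ hσ
      simp only [Finset.mem_filter, mem_boxFun] at hσ
      congr 1
      rw [Fin.sum_univ_castSucc]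
      simp only [Fin.coe_castSucc, Fin.val_last, hσ.2, add_zero]
      rfl
  · -- last entry positive ↔ subtract one from everything
    rw [Gpoly, Finset.mul_sum]
    have hpos : ∀ σ : Fin (p+1) → ℕ, AdjAnti (p+1) σ → σ (Fin.last p) ≠ 0 →
        ∀ i : Fin (p+1), 1 ≤ σ i := by
      intro σ hadj hlast i
      have := anti_of_adj hadj i p (by omega) (by omega)
      simp only [Fin.eta] at this
      have h2 : σ (Fin.last p) = σ ⟨p, by omega⟩ := rfl
      omega
    refine Finset.sum_nbij' (fun σ => fun i : Fin (p+1) => σ i - 1)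
      (fun τ => fun i : Fin (p+1) => τ i + 1) ?_ ?_ ?_ ?_ ?_
    · intro σ hσ
      simp only [Finset.mem_filter, mem_boxFun] at hσ ⊢
      obtain ⟨⟨hbox, hadj⟩, hlast⟩ := hσ
      refine ⟨fun i => ?_, fun k h => ?_⟩
      · show σ i - 1 ≤ m
        have := hbox i; omega
      · show σ ⟨k+1, h⟩ - 1 ≤ σ ⟨k, by omega⟩ - 1
        have := hadj k h; omega
    · intro τ hτ
      simp only [Finset.mem_filter, mem_boxFun] at hτ ⊢
      obtain ⟨hbox, hadj⟩ := hτ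
      refine ⟨⟨fun i => ?_, fun k h => ?_⟩, ?_⟩
      · show τ i + 1 ≤ m + 1
        have := hbox i; omega
      · show τ ⟨k+1, h⟩ + 1 ≤ τ ⟨k, by omega⟩ + 1
        have := hadj k h; omega
      · show τ (Fin.last p) + 1 ≠ 0
        omega
    · intro σ hσ
      simp only [Finset.mem_filter, mem_boxFun] at hσ
      have h1 := hpos σ hσ.1.2 hσ.2
      funext i
      show σ i - 1 + 1 = σ i
      have := h1 i; omega
    · intro τ hτ
      funext i
      show τ i + 1 - 1 = τ i
      omega
    · intro σ hσ
      simp only [Finset.mem_filter, mem_boxFun] at hσ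
      have h1 := hpos σ hσ.1.2 hσ.2
      rw [← pow_add]
      congr 1
      have h2 : ∑ i, σ i = ∑ i : Fin (p+1), ((σ i - 1) + 1) :=
        Finset.sum_congr rfl fun i _ => by have := h1 i; omega
      rw [h2, Finset.sum_add_distrib]
      simp [add_comm]

lemma one_sub_CX_mul (a : Polynomial ℤ) (f : ℕ → Polynomial ℤ) :
    (1 - PowerSeries.C (R := Polynomial ℤ) a * PowerSeries.X) * PowerSeries.mk f
      = PowerSeries.mk (fun n => f n - a * (if n = 0 then 0 else f (n-1))) := by
  ext n
  rw [sub_mul, one_mul, mul_assoc, map_sub, PowerSeries.coeff_C_mul]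
  cases n with
  | zero => simp
  | succ k => simp [PowerSeries.coeff_succ_X_mul, PowerSeries.coeff_mk]

lemma prod_mk_G (p : ℕ) :
    (∏ i ∈ Finset.range (p + 1),
        (1 - PowerSeries.C (R := Polynomial ℤ) (Polynomial.X ^ i) * PowerSeries.X)) *
      PowerSeries.mk (fun m => Gpoly p m) = 1 := by
  induction p with
  | zero =>
    rw [Finset.prod_range_one, pow_zero, one_sub_CX_mul]
    ext n
    simp only [PowerSeries.coeff_mk, PowerSeries.coeff_one, Gpoly_zero, one_mul]
    cases n <;> simp [Gpoly_zero]
  | succ p ih =>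
    rw [Finset.prod_range_succ, mul_assoc,
      show (1 - PowerSeries.C (R := Polynomial ℤ) (Polynomial.X ^ (p+1)) * PowerSeries.X) *
          PowerSeries.mk (fun m => Gpoly (p+1) m) = PowerSeries.mk (fun m => Gpoly p m) from ?_]
    · exact ih
    · rw [one_sub_CX_mul]
      ext n
      simp only [PowerSeries.coeff_mk]
      cases n with
      | zero => simp [Gpoly_m_zero]
      | succ k =>
        simp only [Nat.succ_ne_zero, if_false, Nat.add_sub_cancel]
        rw [Gpoly_rec]
        ring

def csh (S : Finset ℕ) (i : ℕ) : ℕ := (S.filter fun s => i < s).card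

lemma csh_step (S : Finset ℕ) (i : ℕ) :
    csh S i = csh S (i+1) + (if i+1 ∈ S then 1 else 0) := by
  classical
  rw [csh, csh, show S.filter (fun s => i < s)
      = (S.filter fun s => i+1 < s) ∪ (S.filter fun s => s = i+1) from by
    ext s; by_cases hsS : s ∈ S <;> simp [hsS] <;> omega]
  rw [Finset.card_union_of_disjoint (by
    simp only [Finset.disjoint_left, Finset.mem_filter]
    rintro s ⟨_, h⟩ ⟨_, rfl⟩; omega)]
  congr 1
  rw [Finset.filter_eq' S (i+1)]
  split <;> simp

lemma csh_zero {p : ℕ} {S : Finset ℕ} (hS : S ⊆ Finset.Ico 1 p) : csh S 0 = S.card := by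
  rw [csh, Finset.filter_true_of_mem]
  intro s hs
  have := hS hs
  simp only [Finset.mem_Ico] at this
  omega

lemma csh_top {p : ℕ} {S : Finset ℕ} (hS : S ⊆ Finset.Ico 1 p) {i : ℕ} (hi : p - 1 ≤ i) :
    csh S i = 0 := by
  rw [csh, Finset.card_eq_zero, Finset.filter_eq_empty_iff]
  intro s hs
  have := hS hs
  simp only [Finset.mem_Ico] at this
  omega

lemma csh_le_card (S : Finset ℕ) (i : ℕ) : csh S i ≤ S.card := Finset.card_filter_le _ _

lemma sum_csh {p : ℕ} {S : Finset ℕ} (hS : S ⊆ Finset.Ico 1 p) :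
    ∑ i : Fin p, csh S (i : ℕ) = S.sum id := by
  classical
  have h1 : ∀ i : ℕ, csh S i = ∑ s ∈ S, if i < s then 1 else 0 := fun i =>
    Finset.card_filter _ _
  simp only [h1]
  rw [Finset.sum_comm]
  refine Finset.sum_congr rfl fun s hs => ?_
  have hsp := hS hs
  simp only [Finset.mem_Ico] at hsp
  rw [Fin.sum_univ_eq_sum_range (fun j => if j < s then 1 else 0) p]
  rw [← Finset.card_filter]
  rw [show (Finset.range p).filter (fun j => j < s) = Finset.range s from by
    ext j; simp only [Finset.mem_filter, Finset.mem_range]; omega]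
  simp [Finset.card_range, id]

lemma compat_lb {p : ℕ} {S : Finset ℕ} (hS : S ⊆ Finset.Ico 1 p) {f : Fin p → ℕ}
    (hf : Compat p S f) : ∀ k (hk : k < p), csh S k ≤ f ⟨k, hk⟩ := by
  have H : ∀ d k (hk : k < p), p - k = d + 1 → csh S k ≤ f ⟨k, hk⟩ := by
    intro d
    induction d with
    | zero =>
      intro k hk hd
      rw [csh_top hS (by omega)]
      exact Nat.zero_le _
    | succ d ih =>
      intro k hk hd
      have hk1 : k + 1 < p := by omega
      have h2 := ih (k+1) hk1 (by omega)
      have h3 := hf k hk1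
      rw [csh_step]
      split
      · have := h3.2 (by assumption)
        omega
      · have := h3.1
        omega
  intro k hk
  exact H (p - k - 1) k hk (by omega)

lemma Fpoly_eq_of_le {p : ℕ} {S : Finset ℕ} (hS : S ⊆ Finset.Ico 1 p) {m : ℕ}
    (hm : S.card ≤ m) :
    Fpoly p S m = Polynomial.X ^ (S.sum id) * Gpoly p (m - S.card) := by
  classical
  rw [Fpoly, Gpoly, Finset.mul_sum]
  refine Finset.sum_nbij' (fun f => fun i : Fin p => f i - csh S (i : ℕ))
    (fun g => fun i : Fin p => g i + csh S (i : ℕ)) ?_ ?_ ?_ ?_ ?_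
  · intro f hf
    simp only [Finset.mem_filter, mem_boxFun] at hf ⊢
    obtain ⟨hbox, hcompat⟩ := hf
    have hlb := compat_lb hS hcompat
    have hadj : AdjAnti p (fun i : Fin p => f i - csh S (i : ℕ)) := by
      intro k hk
      show f ⟨k+1, hk⟩ - csh S (k+1) ≤ f ⟨k, by omega⟩ - csh S k
      have h1 := hcompat k hk
      have h2 := csh_step S k
      have h3 := hlb k (by omega)
      have h4 := hlb (k+1) hk
      rcases h1 with ⟨h5, h6⟩
      by_cases h7 : k + 1 ∈ S
      · have := h6 h7; rw [if_pos h7] at h2; omega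
      · rw [if_neg h7] at h2; omega
    refine ⟨fun i => ?_, hadj⟩
    have hp : 0 < p := i.pos
    have h0 := anti_of_adj hadj 0 (i : ℕ) (Nat.zero_le _) i.isLt
    simp only [Fin.eta] at h0
    show f i - csh S (i : ℕ) ≤ m - S.card
    have h1 : (fun i : Fin p => f i - csh S (i:ℕ)) ⟨0, hp⟩ = f ⟨0, hp⟩ - csh S 0 := rfl
    have h2 := csh_zero hS
    have h3 : f ⟨0, hp⟩ ≤ m := hbox _
    have h4 : (fun i : Fin p => f i - csh S (i:ℕ)) i = f i - csh S (i:ℕ) := rfl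
    omega
  · intro g hg
    simp only [Finset.mem_filter, mem_boxFun] at hg ⊢
    obtain ⟨hbox, hadj⟩ := hg
    refine ⟨fun i => ?_, fun k hk => ?_⟩
    · show g i + csh S (i : ℕ) ≤ m
      have := hbox i
      have := csh_le_card S (i : ℕ)
      omega
    · show (g ⟨k+1, hk⟩ + csh S (k+1) ≤ g ⟨k, by omega⟩ + csh S k) ∧
        (k+1 ∈ S → g ⟨k+1, hk⟩ + csh S (k+1) < g ⟨k, by omega⟩ + csh S k)
      have h1 := hadj k hk
      have h2 := csh_step S k
      constructor
      · split at h2 <;> omega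
      · intro hmem
        rw [if_pos hmem] at h2
        omega
  · intro f hf
    simp only [Finset.mem_filter, mem_boxFun] at hf
    have hlb := compat_lb hS hf.2
    funext i
    show f i - csh S (i:ℕ) + csh S (i:ℕ) = f i
    have := hlb (i : ℕ) i.isLt
    simp only [Fin.eta] at this
    omega
  · intro g hg
    funext i
    show g i + csh S (i:ℕ) - csh S (i:ℕ) = g i
    omega
  · intro f hf
    simp only [Finset.mem_filter, mem_boxFun] at hf
    have hlb := compat_lb hS hf.2
    rw [← pow_add]
    congr 1
    have h1 : ∀ i : Fin p, f i = (f i - csh S (i:ℕ)) + csh S (i:ℕ) := by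
      intro i
      have := hlb (i:ℕ) i.isLt
      simp only [Fin.eta] at this
      omega
    calc ∑ i, f i = ∑ i : Fin p, ((f i - csh S (i:ℕ)) + csh S (i:ℕ)) :=
          Finset.sum_congr rfl fun i _ => h1 i
      _ = (∑ i : Fin p, (f i - csh S (i:ℕ))) + ∑ i : Fin p, csh S (i:ℕ) :=
          Finset.sum_add_distrib
      _ = S.sum id + ∑ i : Fin p, (f i - csh S (i:ℕ)) := by rw [sum_csh hS]; ring

lemma Fpoly_eq_of_lt {p : ℕ} {S : Finset ℕ} (hS : S ⊆ Finset.Ico 1 p) {m : ℕ}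
    (hm : m < S.card) : Fpoly p S m = 0 := by
  classical
  have hne : S.Nonempty := Finset.card_pos.mp (by omega)
  obtain ⟨s, hs⟩ := hne
  have hp : 0 < p := by
    have := hS hs
    simp only [Finset.mem_Ico] at this
    omega
  have hempty : (boxFun p m).filter (Compat p S) = ∅ := by
    rw [Finset.filter_eq_empty_iff]
    intro f hf hcompat
    rw [mem_boxFun] at hf
    have hlb := compat_lb hS hcompat 0 hp
    rw [csh_zero hS] at hlb
    have := hf ⟨0, hp⟩
    omega
  rw [Fpoly, hempty, Finset.sum_empty]

lemma mk_Fpoly {p : ℕ} {S : Finset ℕ} (hS : S ⊆ Finset.Ico 1 p) :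
    PowerSeries.mk (fun m => Fpoly p S m) =
      PowerSeries.C (R := Polynomial ℤ) (Polynomial.X ^ (S.sum id)) *
        PowerSeries.X ^ S.card * PowerSeries.mk (fun m => Gpoly p m) := by
  ext n
  rw [mul_assoc, PowerSeries.coeff_mk, PowerSeries.coeff_C_mul,
    PowerSeries.coeff_X_pow_mul']
  split
  · rw [PowerSeries.coeff_mk, Fpoly_eq_of_le hS (by assumption)]
  · rw [Fpoly_eq_of_lt hS (by omega), mul_zero]


/-- the sorting key -/
def keyf (p m : ℕ) (σ : Fin p → ℕ) : Fin p → ℕ := fun i => (m - σ i) * p + (i : ℕ)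

lemma key_le {p a b x y : ℕ} (hx : x < p) (h : a * p + x ≤ b * p + y) (hy : y < p) :
    a ≤ b := by
  by_contra hab
  push_neg at hab
  have h1 : (b + 1) * p ≤ a * p := Nat.mul_le_mul_right p (by omega)
  rw [add_mul, one_mul] at h1
  omega

lemma mono_facts {p m : ℕ} {σ : Fin p → ℕ} (hσ : ∀ i, σ i ≤ m) {π : Equiv.Perm (Fin p)}
    (hmono : Monotone (keyf p m σ ∘ π)) :
    (∀ i j : Fin p, i ≤ j → σ (π j) ≤ σ (π i)) ∧
      (∀ i j : Fin p, i < j → σ (π i) = σ (π j) → π i < π j) := by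
  constructor
  · intro i j hij
    have h := hmono hij
    simp only [Function.comp_apply, keyf] at h
    have h2 : m - σ (π i) ≤ m - σ (π j) := key_le (π i).isLt h (π j).isLt
    have := hσ (π i)
    have := hσ (π j)
    omega
  · intro i j hij heq
    have h := hmono (le_of_lt hij)
    simp only [Function.comp_apply, keyf, heq] at h
    have h2 : (π i : ℕ) ≤ (π j : ℕ) := by omega
    have h3 : π i ≠ π j := fun he => absurd (π.injective he) (ne_of_lt hij)
    rw [Fin.lt_iff_val_lt_val]
    rcases Nat.eq_or_lt_of_le h2 with h4 | h4
    · exact absurd (Fin.ext h4) h3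
    · exact h4

lemma mem_desSet {p : ℕ} (π : Equiv.Perm (Fin p)) (k : ℕ) (h : k + 1 < p) :
    ((k+1) ∈ desSet p fun x => ((π x : ℕ))) ↔ π ⟨k+1, h⟩ < π ⟨k, by omega⟩ := by
  simp only [desSet, Finset.mem_filter, Finset.mem_Ico, Nat.add_sub_cancel,
    Fin.lt_iff_val_lt_val]
  constructor
  · rintro ⟨-, h1, h2, hlt⟩
    exact hlt
  · intro hlt
    exact ⟨⟨by omega, h⟩, by omega, h, hlt⟩

lemma compat_adj_pi {p : ℕ} {π : Equiv.Perm (Fin p)} {lam : Fin p → ℕ}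
    (hc : Compat p (desSet p fun x => ((π x : ℕ))) lam) (k : ℕ) (hk : k + 1 < p)
    (heq : lam ⟨k+1, hk⟩ = lam ⟨k, by omega⟩) : π ⟨k, by omega⟩ < π ⟨k+1, hk⟩ := by
  by_contra hcon
  have hne : π ⟨k, by omega⟩ ≠ π ⟨k+1, hk⟩ := by
    intro he
    have := π.injective he
    simp only [Fin.mk.injEq] at this
    omega
  have hlt : π ⟨k+1, hk⟩ < π ⟨k, by omega⟩ :=
    lt_of_le_of_ne (not_lt.mp hcon) (Ne.symm hne)
  have hmem := (mem_desSet π k hk).mpr hlt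
  have := (hc k hk).2 hmem
  omega

lemma compat_chain {p : ℕ} {π : Equiv.Perm (Fin p)} {lam : Fin p → ℕ}
    (hc : Compat p (desSet p fun x => ((π x : ℕ))) lam) :
    ∀ a b : ℕ, (hab : a < b) → ∀ (hb : b < p), lam ⟨b, hb⟩ ≤ lam ⟨a, by omega⟩ ∧
      (lam ⟨b, hb⟩ = lam ⟨a, by omega⟩ → π ⟨a, by omega⟩ < π ⟨b, hb⟩) := by
  intro a b hab
  induction b, hab using Nat.le_induction with
  | base => exact fun hb => ⟨(hc a hb).1, fun heq => compat_adj_pi hc a hb heq⟩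
  | succ n hn ih =>
    intro hb
    have hbn : n < p := by omega
    have h1 := ih hbn
    have h2 := (hc n hb).1
    refine ⟨le_trans h2 h1.1, fun heq => ?_⟩
    have e1 : lam ⟨n, hbn⟩ = lam ⟨a, by omega⟩ := le_antisymm h1.1 (heq ▸ h2)
    have e2 : lam ⟨n+1, hb⟩ = lam ⟨n, hbn⟩ := by omega
    exact lt_trans (h1.2 e1) (compat_adj_pi hc n hb e2)


lemma key_mono {p a b x y : ℕ} (hx : x < p) (h : a < b ∨ (a = b ∧ x ≤ y)) :
    a * p + x ≤ b * p + y := by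
  rcases h with h | ⟨rfl, h⟩
  · have h1 : (a + 1) * p ≤ b * p := Nat.mul_le_mul_right p (by omega)
    rw [add_mul, one_mul] at h1
    omega
  · omega

lemma step1 (p m : ℕ) (P : PartialOrder (Fin p)) :
    Upoly p P m
      = ∑ f ∈ (boxFun p m).filter (IsPPartition p P), Polynomial.X ^ (∑ i, f i) := by
  classical
  rw [Upoly]
  refine Finset.sum_nbij' (fun σ : Fin p → Fin (m+1) => fun i => (σ i : ℕ))
    (fun f => fun i => (⟨min (f i) m, by omega⟩ : Fin (m+1))) ?_ ?_ ?_ ?_ ?_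
  · intro σ hσ
    simp only [Finset.mem_filter, Finset.mem_univ, true_and] at hσ
    simp only [Finset.mem_filter, mem_boxFun]
    exact ⟨fun i => Fin.is_le _, hσ⟩
  · intro f hf
    simp only [Finset.mem_filter, mem_boxFun] at hf
    simp only [Finset.mem_filter, Finset.mem_univ, true_and]
    have he : (fun i => (((⟨min (f i) m, by omega⟩ : Fin (m+1))) : ℕ)) = f := by
      funext i
      show min (f i) m = f i
      exact Nat.min_eq_left (hf.1 i)
    rw [he]
    exact hf.2
  · intro σ hσ
    funext i
    apply Fin.ext
    show min ((σ i : ℕ)) m = (σ i : ℕ)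
    exact Nat.min_eq_left (Fin.is_le _)
  · intro f hf
    simp only [Finset.mem_filter, mem_boxFun] at hf
    funext i
    show min (f i) m = f i
    exact Nat.min_eq_left (hf.1 i)
  · intro σ hσ
    rfl

lemma lemA' (p m : ℕ) (R : Fin p → Fin p → Prop) (hR : ∀ i, ¬ R i i)
    (A : Finset (Fin p → ℕ)) (L : Finset (Equiv.Perm (Fin p)))
    (hA : ∀ f, f ∈ A ↔ ((∀ i, f i ≤ m) ∧
      ∀ i j : Fin p, R i j → f j ≤ f i ∧ (j < i → f j < f i)))
    (hL : ∀ π, π ∈ L ↔ ∀ i j : Fin p, R (π i) (π j) → i < j) :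
    ∑ f ∈ A, Polynomial.X ^ (∑ i, f i)
    = ∑ π ∈ L, Fpoly p (desSet p fun k => ((π k : ℕ))) m := by
  classical
  simp only [Fpoly]
  rw [Finset.sum_sigma']
  refine Finset.sum_nbij'
    (fun f => ⟨Tuple.sort (keyf p m f), f ∘ (Tuple.sort (keyf p m f))⟩)
    (fun x => x.2 ∘ (x.1 : Equiv.Perm (Fin p)).symm) ?_ ?_ ?_ ?_ ?_
  · -- forward membership
    intro f hf
    rw [hA] at hf
    obtain ⟨hbox, hPP⟩ := hf
    set π := Tuple.sort (keyf p m f) with hπ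
    have hmono := (Tuple.eq_sort_iff.mp hπ).1
    obtain ⟨k1, k2⟩ := mono_facts hbox hmono
    have k3 : ∀ i j : Fin p, i < j → π j < π i → f (π j) < f (π i) := by
      intro i j hij hlt
      refine lt_of_le_of_ne (k1 i j hij.le) fun h => ?_
      exact absurd (k2 i j hij h.symm) (not_lt.mpr hlt.le)
    rw [Finset.mem_sigma]
    constructor
    · rw [hL]
      intro i j hPlt
      by_contra hcon
      have hne : i ≠ j := by
        rintro rfl
        exact hR _ hPlt
      have hji : j < i := lt_of_le_of_ne (not_lt.mp hcon) (Ne.symm hne)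
      have hPij := hPP (π i) (π j) hPlt
      have e : f (π j) = f (π i) := le_antisymm hPij.1 (k1 j i hji.le)
      have h2 : π j < π i := k2 j i hji e
      exact absurd (hPij.2 h2) (by omega)
    · simp only [Finset.mem_filter, mem_boxFun]
      refine ⟨fun i => hbox _, fun k hk => ?_⟩
      have hle : (⟨k, by omega⟩ : Fin p) ≤ ⟨k+1, hk⟩ := by
        simp only [Fin.mk_le_mk]; omega
      have hlt : (⟨k, by omega⟩ : Fin p) < ⟨k+1, hk⟩ := by
        simp only [Fin.mk_lt_mk]; omega
      constructor
      · exact k1 _ _ hle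
      · intro hmem
        have := (mem_desSet π k hk).mp hmem
        exact k3 _ _ hlt this
  · -- backward membership
    rintro ⟨π, lam⟩ hx
    rw [Finset.mem_sigma] at hx
    obtain ⟨hπ, hlam⟩ := hx
    rw [hL] at hπ
    simp only [Finset.mem_filter, mem_boxFun] at hlam
    obtain ⟨hbox, hc⟩ := hlam
    rw [hA]
    have chain := compat_chain hc
    refine ⟨fun i => hbox _, ?_⟩
    intro x y hPlt
    have hij : π.symm x < π.symm y := by
      apply hπ
      simpa using hPlt
    set i := π.symm x with hi
    set j := π.symm y with hj
    have hch := chain (i : ℕ) (j : ℕ) hij j.isLt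
    simp only [Fin.eta] at hch
    constructor
    · exact hch.1
    · intro hyx
      rcases Nat.lt_or_ge ((lam ∘ π.symm) y) ((lam ∘ π.symm) x) with h | h
      · exact h
      · exfalso
        have heq : lam j = lam i := le_antisymm hch.1 h
        have := hch.2 heq
        rw [π.apply_symm_apply, π.apply_symm_apply] at this
        exact absurd hyx (not_lt.mpr this.le)
  · -- left inverse
    intro f hf
    funext i
    simp
  · -- right inverse
    rintro ⟨π, lam⟩ hx
    rw [Finset.mem_sigma] at hx
    obtain ⟨hπ, hlam⟩ := hx
    simp only [Finset.mem_filter, mem_boxFun] at hlam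
    obtain ⟨hbox, hc⟩ := hlam
    have chain := compat_chain hc
    have hval : ∀ i : Fin p,
        keyf p m (lam ∘ π.symm) (π i) = (m - lam i) * p + (π i : ℕ) := by
      intro i
      simp [keyf]
    have hch : ∀ i j : Fin p, i < j →
        lam j ≤ lam i ∧ (lam j = lam i → π i < π j) := by
      intro i j hij
      have h := chain (i : ℕ) (j : ℕ) hij j.isLt
      simpa only [Fin.eta] using h
    have hsort : Tuple.sort (keyf p m (lam ∘ π.symm)) = π := by
      symm
      rw [Tuple.eq_sort_iff]
      constructor
      · intro i j hij
        rcases eq_or_lt_of_le hij with rfl | hij2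
        · exact le_refl _
        · have h := hch i j hij2
          simp only [Function.comp_apply, hval]
          apply key_mono (π i).isLt
          rcases Nat.lt_or_ge (lam j) (lam i) with h2 | h2
          · left
            have := hbox i
            omega
          · right
            have heq : lam j = lam i := le_antisymm h.1 h2
            have h3 := h.2 heq
            exact ⟨by omega, le_of_lt h3⟩
      · intro i j hij heq
        simp only [hval] at heq
        have h1 : m - lam i ≤ m - lam j := key_le (π i).isLt (le_of_eq heq) (π j).isLt
        have h2 : m - lam j ≤ m - lam i := key_le (π j).isLt (le_of_eq heq.symm) (π i).isLt
        have hbi := hbox i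
        have hbj := hbox j
        have heq2 : lam j = lam i := by omega
        exact (hch i j hij).2 heq2
    refine Sigma.ext hsort ?_
    show HEq ((lam ∘ π.symm) ∘ (Tuple.sort (keyf p m (lam ∘ π.symm)))) lam
    rw [hsort]
    refine heq_of_eq ?_
    funext i
    simp
  · -- weights agree
    intro f hf
    congr 1
    exact (Equiv.sum_comp (Tuple.sort (keyf p m f)) f).symm

lemma Upoly_eq_sum_Fpoly (p m : ℕ) (P : PartialOrder (Fin p)) :
    Upoly p P m = ∑ π ∈ Finset.univ.filter (IsLinExt p P),
      Fpoly p (desSet p fun k => ((π k : ℕ))) m := by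
  rw [step1]
  refine lemA' p m P.lt (fun i h => (@lt_irrefl _ P.toPreorder i) h) _ _
    (fun f => ?_) (fun π => ?_)
  · simp only [Finset.mem_filter, mem_boxFun]
    exact Iff.rfl
  · simp only [Finset.mem_filter, Finset.mem_univ, true_and]
    exact Iff.rfl

end

/-- `(∏_{i=0}^{p} (1 − t q^i)) ⬝ ∑_{m≥0} U_m(P) t^m = ∑_{π ∈ L(P)} q^{maj π} t^{des π}`
in `(ℤ[q])[[t]]`. -/
theorem majdes_generating_function (p : ℕ) (hp : 0 < p) (P : PartialOrder (Fin p)) :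
    (∏ i ∈ Finset.range (p + 1),
        (1 - PowerSeries.C (R := Polynomial ℤ) (Polynomial.X ^ i) * PowerSeries.X)) *
      PowerSeries.mk (fun m => Upoly p P m) =
    ∑ π ∈ Finset.univ.filter (IsLinExt p P),
      PowerSeries.C (R := Polynomial ℤ)
          (Polynomial.X ^ ((desSet p fun k => ((π k : ℕ))).sum id)) *
        PowerSeries.X ^ (desSet p fun k => ((π k : ℕ))).card := by
  classical
  have hmk : PowerSeries.mk (fun m => Upoly p P m)
      = ∑ π ∈ Finset.univ.filter (IsLinExt p P),
          PowerSeries.mk (fun m => Fpoly p (desSet p fun k => ((π k : ℕ))) m) := by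
    refine PowerSeries.ext fun n => ?_
    simp only [PowerSeries.coeff_mk, map_sum]
    exact Upoly_eq_sum_Fpoly p n P
  rw [hmk, Finset.mul_sum]
  refine Finset.sum_congr rfl fun π hπ => ?_
  have hsub : (desSet p fun k => ((π k : ℕ))) ⊆ Finset.Ico 1 p :=
    Finset.filter_subset _ _
  rw [mk_Fpoly hsub]
  calc (∏ i ∈ Finset.range (p + 1),
        (1 - PowerSeries.C (R := Polynomial ℤ) (Polynomial.X ^ i) * PowerSeries.X)) *
      (PowerSeries.C (R := Polynomial ℤ)
          (Polynomial.X ^ ((desSet p fun k => ((π k : ℕ))).sum id)) *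
        PowerSeries.X ^ (desSet p fun k => ((π k : ℕ))).card *
        PowerSeries.mk (fun m => Gpoly p m))
      = (PowerSeries.C (R := Polynomial ℤ)
          (Polynomial.X ^ ((desSet p fun k => ((π k : ℕ))).sum id)) *
        PowerSeries.X ^ (desSet p fun k => ((π k : ℕ))).card) *
        ((∏ i ∈ Finset.range (p + 1),
          (1 - PowerSeries.C (R := Polynomial ℤ) (Polynomial.X ^ i) * PowerSeries.X)) *
          PowerSeries.mk (fun m => Gpoly p m)) := by ring
    _ = _ := by rw [prod_mk_G p, mul_one]
end

section
/- In the ring of formal power series ℤ[[t]], the identity (1 − t)^{p+1} · ∑_{m≥0} Ω(P; m) t^m = ∑_{π ∈ L(P)} t^{1 + des(π)} holds, where Ω(P; m) denotes the number of P-partitions all of whose values lie in {0, 1, …, m−1} (so Ω(P; 0) = 0). -/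
open scoped Classical

/-- `Ω(P; m)` : the number of `P`-partitions with all values in `{0, 1, …, m-1}`. -/
noncomputable def orderPolyVal (p : ℕ) (P : PartialOrder (Fin p)) (m : ℕ) : ℕ :=
  (Finset.univ.filter (fun σ : Fin p → Fin m =>
      IsPPartition p P fun i => (σ i : ℕ))).card

namespace PPart

variable {p : ℕ} (π : Equiv.Perm (Fin p))

/-- The descent set of the permutation `π`. -/
def DD : Finset ℕ := desSet p (fun k => ((π k : ℕ)))

/-- Number of descents strictly after position `n`. -/
def EE (n : ℕ) : ℕ := ((DD π).filter (fun i => n < i)).card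

/-- `σ ∘ π` is weakly decreasing, strictly at descents of `π`. -/
def Compat (σ : Fin p → ℕ) : Prop :=
  ∀ (k : ℕ) (h : k + 1 < p),
    σ (π ⟨k+1, h⟩) + (if k+1 ∈ DD π then 1 else 0) ≤ σ (π ⟨k, Nat.lt_of_succ_lt h⟩)

theorem mem_DD {k : ℕ} (h : k + 1 < p) :
    (k+1 ∈ DD π) ↔ π ⟨k+1, h⟩ < π ⟨k, Nat.lt_of_succ_lt h⟩ := by
  simp only [DD, desSet, Finset.mem_filter, Finset.mem_Ico]
  constructor
  · rintro ⟨-, h1, h2, hlt⟩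
    have : (⟨k+1-1, h1⟩ : Fin p) = ⟨k, Nat.lt_of_succ_lt h⟩ := by
      apply Fin.ext; simp
    rw [this] at hlt
    exact Fin.lt_def.2 hlt
  · intro hlt
    refine ⟨⟨Nat.le_add_left 1 k, h⟩, Nat.lt_of_succ_lt h, h, ?_⟩
    simpa using Fin.lt_def.1 hlt

theorem DD_subset : DD π ⊆ Finset.Ico 1 p := Finset.filter_subset _ _

theorem EE_zero : EE π 0 = (DD π).card := by
  unfold EE
  congr 1
  apply Finset.filter_true_of_mem
  intro i hi
  have := (Finset.mem_Ico.1 (DD_subset π hi)).1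
  omega

theorem EE_last : EE π (p - 1) = 0 := by
  unfold EE
  rw [Finset.card_eq_zero, Finset.filter_eq_empty_iff]
  intro i hi
  have := Finset.mem_Ico.1 (DD_subset π hi)
  omega

theorem EE_antitone {a b : ℕ} (hab : a ≤ b) : EE π b ≤ EE π a := by
  apply Finset.card_le_card
  apply Finset.monotone_filter_right
  intro i _ hi
  simpa using lt_of_le_of_lt hab hi

theorem EE_step (n : ℕ) : EE π n = EE π (n+1) + (if n+1 ∈ DD π then 1 else 0) := by
  unfold EE
  have hsplit : (DD π).filter (fun i => n < i)
      = ((DD π).filter (fun i => n+1 < i)) ∪ ((DD π).filter (fun i => i = n+1)) := by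
    rw [← Finset.filter_or]
    apply Finset.filter_congr
    intro i _
    constructor
    · intro h; omega
    · intro h; omega
  rw [hsplit, Finset.card_union_of_disjoint, Finset.filter_eq']
  · split <;> simp
  · rw [Finset.disjoint_left]
    intro i hi hi'
    have h1 := (Finset.mem_filter.1 hi).2
    have h2 := (Finset.mem_filter.1 hi').2
    omega

end PPart

namespace PPart

variable {p : ℕ} {π : Equiv.Perm (Fin p)} {σ : Fin p → ℕ}

/-- Chain inequality: `σ(π l) + E a ≤ σ(π a) + E l` for `a ≤ l`. -/
theorem chain (hc : Compat π σ) :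
    ∀ (a l : ℕ) (ha : a < p) (hl : l < p), a ≤ l →
      σ (π ⟨l, hl⟩) + EE π a ≤ σ (π ⟨a, ha⟩) + EE π l := by
  intro a l ha hl hal
  induction l with
  | zero =>
    have : a = 0 := Nat.le_zero.1 hal
    subst this; omega
  | succ n ih =>
    rcases Nat.lt_or_ge a (n+1) with h | h
    · have hn : n < p := Nat.lt_of_succ_lt hl
      have h1 := ih hn (Nat.lt_succ_iff.1 h)
      have h2 := hc n hl
      have h3 := EE_step π n
      omega
    · have : a = n + 1 := le_antisymm hal h
      subst this; omega

theorem val_le_of_compat (hc : Compat π σ) {a l : ℕ} (ha : a < p) (hl : l < p)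
    (hal : a ≤ l) : σ (π ⟨l, hl⟩) ≤ σ (π ⟨a, ha⟩) := by
  have h1 := chain hc a l ha hl hal
  have h2 := EE_antitone π hal
  omega

theorem EE_le_val (hp : 0 < p) (hc : Compat π σ) {a : ℕ} (ha : a < p) :
    EE π a ≤ σ (π ⟨a, ha⟩) := by
  have hl : p - 1 < p := by omega
  have h1 := chain hc a (p-1) ha hl (by omega)
  have h2 := EE_last π
  omega

/-- If values are equal along a stretch with no strict descent forced, labels increase. -/
theorem label_lt_of_val_eq (hc : Compat π σ) :
    ∀ (a l : ℕ) (ha : a < p) (hl : l < p), a < l →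
      σ (π ⟨l, hl⟩) = σ (π ⟨a, ha⟩) → π ⟨a, ha⟩ < π ⟨l, hl⟩ := by
  intro a l ha hl hal heq
  induction l with
  | zero => omega
  | succ n ih =>
    have hn : n < p := Nat.lt_of_succ_lt hl
    have hstep := hc n hl
    have hne : π ⟨n, hn⟩ ≠ π ⟨n+1, hl⟩ := by
      intro h
      have := π.injective h
      simp only [Fin.mk.injEq] at this
      omega
    have hval_n : σ (π ⟨n, hn⟩) = σ (π ⟨a, ha⟩) := by
      have h1 := val_le_of_compat hc ha hn (by omega : a ≤ n)
      have h2 : σ (π ⟨n+1, hl⟩) ≤ σ (π ⟨n, hn⟩) := by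
        rcases Classical.em (n+1 ∈ DD π) with h | h <;> simp [h] at hstep <;> omega
      omega
    have hnotdes : n+1 ∉ DD π := by
      intro hmem
      simp [hmem] at hstep
      omega
    have hlabel : π ⟨n, hn⟩ < π ⟨n+1, hl⟩ := by
      rcases lt_or_gt_of_ne hne with h | h
      · exact h
      · exact absurd ((mem_DD π hl).2 h) hnotdes
    rcases Nat.lt_or_ge a n with h | h
    · exact lt_trans (ih hn h (by omega)) hlabel
    · have : a = n := by omega
      subst this
      exact hlabel

end PPart

namespace PPart

variable {p : ℕ} {π : Equiv.Perm (Fin p)}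

/-- Sorting key: sort by value descending, breaking ties by label ascending. -/
def key (σ : Fin p → ℕ) (i : Fin p) : Lex (ℕᵒᵈ × Fin p) :=
  toLex (OrderDual.toDual (σ i), i)

theorem key_injective (σ : Fin p → ℕ) : Function.Injective (key σ) := by
  intro i j h
  have := congrArg (fun x => (ofLex x).2) h
  simpa [key] using this

theorem key_le_iff (σ : Fin p → ℕ) (i j : Fin p) :
    key σ i ≤ key σ j ↔ σ j < σ i ∨ (σ i = σ j ∧ i ≤ j) := by
  simp only [key, Prod.Lex.le_iff, ofLex_toLex, OrderDual.toDual_lt_toDual, OrderDual.toDual_inj]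

theorem sort_eq {σ : Fin p → ℕ} (hc : Compat π σ) : Tuple.sort (key σ) = π := by
  symm
  rw [Tuple.eq_sort_iff]
  constructor
  · intro x y hxy
    rcases eq_or_lt_of_le hxy with h | h
    · exact le_of_eq (by rw [h])
    · show key σ (π x) ≤ key σ (π y)
      rw [key_le_iff]
      have hx : (⟨(x : ℕ), x.isLt⟩ : Fin p) = x := Fin.eta x x.isLt
      have hy : (⟨(y : ℕ), y.isLt⟩ : Fin p) = y := Fin.eta y y.isLt
      have hle : σ (π y) ≤ σ (π x) := by
        have := val_le_of_compat hc x.isLt y.isLt (le_of_lt (Fin.lt_def.1 h))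
        rwa [hx, hy] at this
      rcases eq_or_lt_of_le hle with he | hlt
      · right
        refine ⟨he.symm, le_of_lt ?_⟩
        have := label_lt_of_val_eq hc x y x.isLt y.isLt (Fin.lt_def.1 h) (by rw [hx, hy]; exact he)
        rwa [hx, hy] at this
      · left; exact hlt
  · intro i j hij hkey
    exact absurd (π.injective (key_injective σ hkey)) (ne_of_lt hij)

theorem compat_sort (σ : Fin p → ℕ) : Compat (Tuple.sort (key σ)) σ := by
  intro k h
  set τ := Tuple.sort (key σ) with hτ
  have hmono := Tuple.monotone_sort (key σ)
  have hle : key σ (τ ⟨k, Nat.lt_of_succ_lt h⟩) ≤ key σ (τ ⟨k+1, h⟩) := by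
    apply hmono
    simp [Fin.le_def]
  rw [key_le_iff] at hle
  rcases hle with hlt | ⟨heq, hle⟩
  · split <;> omega
  · have hnd : k+1 ∉ DD τ := by
      intro hmem
      have := (mem_DD τ h).1 hmem
      have hne : τ ⟨k, Nat.lt_of_succ_lt h⟩ ≠ τ ⟨k+1, h⟩ := by
        intro hh
        have := τ.injective hh
        simp only [Fin.mk.injEq] at this
        omega
      exact absurd this (not_lt.2 (le_of_lt (lt_of_le_of_ne hle hne)))
    simp [hnd]
    omega

end PPart

namespace PPart

variable {p : ℕ} {P : PartialOrder (Fin p)} {π : Equiv.Perm (Fin p)}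

theorem ppart_of_compat {σ : Fin p → ℕ} (hL : IsLinExt p P π) (hc : Compat π σ) :
    IsPPartition p P σ := by
  intro i j hij
  set a := π.symm i with ha
  set b := π.symm j with hb
  have hia : i = π a := (π.apply_symm_apply i).symm
  have hjb : j = π b := (π.apply_symm_apply j).symm
  have hab : a < b := hL a b (by rw [← hia, ← hjb]; exact hij)
  have haa : (⟨(a : ℕ), a.isLt⟩ : Fin p) = a := Fin.eta a a.isLt
  have hbb : (⟨(b : ℕ), b.isLt⟩ : Fin p) = b := Fin.eta b b.isLt
  constructor
  · have := val_le_of_compat hc a.isLt b.isLt (le_of_lt (Fin.lt_def.1 hab))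
    rw [haa, hbb, ← hia, ← hjb] at this
    exact this
  · intro hji
    by_contra hcon
    have hle : σ j ≤ σ i := by
      have := val_le_of_compat hc a.isLt b.isLt (le_of_lt (Fin.lt_def.1 hab))
      rw [haa, hbb, ← hia, ← hjb] at this
      exact this
    have heq : σ j = σ i := le_antisymm hle (not_lt.1 hcon)
    have := label_lt_of_val_eq hc a b a.isLt b.isLt (Fin.lt_def.1 hab)
      (by rw [haa, hbb, ← hia, ← hjb]; exact heq)
    rw [haa, hbb, ← hia, ← hjb] at this
    have h1 := Fin.lt_def.1 this
    have h2 := Fin.lt_def.1 hji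
    exact Nat.lt_asymm h1 h2

theorem linext_sort {σ : Fin p → ℕ} (hpp : IsPPartition p P σ) :
    IsLinExt p P (Tuple.sort (key σ)) := by
  set τ := Tuple.sort (key σ) with hτ
  intro a b hab
  have hmono := Tuple.monotone_sort (key σ)
  rcases lt_trichotomy a b with h | h | h
  · exact h
  · exact absurd hab (by rw [h]; exact @lt_irrefl _ P.toPreorder _)
  · exfalso
    have hkey : key σ (τ b) ≤ key σ (τ a) := hmono (Fin.le_def.2 (Nat.le_of_lt (Fin.lt_def.1 h)))
    rw [key_le_iff] at hkey
    obtain ⟨hle, hstrict⟩ := hpp (τ a) (τ b) hab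
    rcases hkey with hlt | ⟨heq, hble⟩
    · exact absurd hle (not_le.2 hlt)
    · have hbaval : (b : ℕ) < (a : ℕ) := Fin.lt_def.1 h
      have hneval : τ b ≠ τ a := by
        intro hh
        have h2 : b = a := τ.injective hh
        have h3 := congrArg Fin.val h2
        exact (Nat.ne_of_lt hbaval) h3
      have hltval : (τ b : ℕ) < (τ a : ℕ) :=
        lt_of_le_of_ne (Fin.le_def.1 hble) (fun hh => hneval (Fin.ext hh))
      have hfin := hstrict (Fin.lt_def.2 hltval)
      rw [heq] at hfin
      exact Nat.lt_irrefl _ hfin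

end PPart

namespace PPart

variable {p : ℕ} {π : Equiv.Perm (Fin p)}

theorem strictMono_le_apply {g : Fin p → ℕ} (hg : StrictMono g) (j : Fin p) :
    (j : ℕ) ≤ g j := by
  suffices h : ∀ n (hn : n < p), n ≤ g ⟨n, hn⟩ by
    have := h ↑j j.isLt
    rwa [Fin.eta] at this
  intro n
  induction n with
  | zero => intro h; exact Nat.zero_le _
  | succ n ih =>
    intro h
    have h1 := ih (Nat.lt_of_succ_lt h)
    have h2 : g ⟨n, Nat.lt_of_succ_lt h⟩ < g ⟨n+1, h⟩ := hg (by simp [Fin.lt_def])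
    omega

/-- The strictly-decreasing rearrangement value at position `k`. -/
def uval (π : Equiv.Perm (Fin p)) (σ : Fin p → ℕ) (k : Fin p) : ℕ :=
  σ (π k) + (p - 1 - (k : ℕ)) - EE π (k : ℕ)

theorem uval_invariant (hp : 0 < p) {σ : Fin p → ℕ} (hc : Compat π σ) (k : Fin p) :
    uval π σ k + EE π (k : ℕ) = σ (π k) + (p - 1 - (k : ℕ)) := by
  have h := EE_le_val hp hc k.isLt
  rw [Fin.eta] at h
  unfold uval
  omega

theorem uval_strictAnti (hp : 0 < p) {σ : Fin p → ℕ} (hc : Compat π σ) :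
    StrictAnti (uval π σ) := by
  intro k l hkl
  have hkl' : (k : ℕ) < (l : ℕ) := Fin.lt_def.1 hkl
  have hch := chain hc (k : ℕ) (l : ℕ) k.isLt l.isLt (le_of_lt hkl')
  simp only [Fin.eta] at hch
  have ik := uval_invariant hp hc k
  have il := uval_invariant hp hc l
  have hlp := l.isLt
  omega

theorem uval_lt (hp : 0 < p) {σ : Fin p → ℕ} (hc : Compat π σ) {m : ℕ}
    (hb : ∀ i, σ i < m) (hm : (DD π).card + 1 ≤ m) (k : Fin p) :
    uval π σ k < m - ((DD π).card + 1) + p := by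
  have i0 := uval_invariant hp hc ⟨0, hp⟩
  simp only [EE_zero] at i0
  have hb0 := hb (π ⟨0, hp⟩)
  have hle : uval π σ k ≤ uval π σ ⟨0, hp⟩ := by
    rcases Nat.eq_zero_or_pos (k : ℕ) with h | h
    · have : k = ⟨0, hp⟩ := Fin.ext h
      rw [this]
    · exact le_of_lt (uval_strictAnti hp hc (Fin.lt_def.2 (by simpa using h)))
  omega

/-- Recover position values from a strictly increasing enumeration `w`. -/
def bval (π : Equiv.Perm (Fin p)) (w : Fin p → ℕ) (k : Fin p) : ℕ :=
  w k.rev + EE π (k : ℕ) - (p - 1 - (k : ℕ))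

theorem bval_invariant (hw : StrictMono w) (k : Fin p) :
    bval π w k + (p - 1 - (k : ℕ)) = w k.rev + EE π (k : ℕ) := by
  have h1 := strictMono_le_apply hw k.rev
  have h2 : (k.rev : ℕ) = p - ((k : ℕ) + 1) := Fin.val_rev k
  have := k.isLt
  unfold bval
  omega

theorem bval_compat (hw : StrictMono w) :
    Compat π (fun i => bval π w (π.symm i)) := by
  intro k h
  simp only [Equiv.symm_apply_apply]
  have e1 : bval π w ⟨k, Nat.lt_of_succ_lt h⟩ + (p - 1 - k)
      = w (⟨k, Nat.lt_of_succ_lt h⟩ : Fin p).rev + EE π k := by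
    simpa using bval_invariant (π := π) hw ⟨k, Nat.lt_of_succ_lt h⟩
  have e2 : bval π w ⟨k+1, h⟩ + (p - 1 - (k+1))
      = w (⟨k+1, h⟩ : Fin p).rev + EE π (k+1) := by
    simpa using bval_invariant (π := π) hw ⟨k+1, h⟩
  have hrev : (⟨k+1, h⟩ : Fin p).rev < (⟨k, Nat.lt_of_succ_lt h⟩ : Fin p).rev := by
    rw [Fin.lt_def, Fin.val_rev, Fin.val_rev]
    simp only [Fin.val_mk]
    omega
  have hwlt := hw hrev
  have hstep := EE_step π k
  clear hrev
  by_cases hd : k + 1 ∈ DD π <;>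
  · simp only [hd, if_true, if_false] at hstep ⊢
    generalize hB1 : bval π w ⟨k, Nat.lt_of_succ_lt h⟩ = B1 at e1 ⊢
    generalize hB2 : bval π w ⟨k+1, h⟩ = B2 at e2 ⊢
    generalize hW1 : w (⟨k, Nat.lt_of_succ_lt h⟩ : Fin p).rev = W1 at e1 hwlt
    generalize hW2 : w (⟨k+1, h⟩ : Fin p).rev = W2 at e2 hwlt
    generalize hE1 : EE π k = E1 at e1 hstep
    generalize hE2 : EE π (k+1) = E2 at e2 hstep
    omega

theorem bval_lt (hp : 0 < p) (hw : StrictMono w) {m : ℕ} (hm : (DD π).card + 1 ≤ m)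
    (hN : ∀ j : Fin p, w j < m - ((DD π).card + 1) + p) (k : Fin p) :
    bval π w k < m := by
  have hc := bval_compat (π := π) hw
  have hle := val_le_of_compat hc (a := 0) (l := (k : ℕ)) hp k.isLt (Nat.zero_le _)
  simp only [Equiv.symm_apply_apply, Fin.eta] at hle
  have i0 := bval_invariant (π := π) hw ⟨0, hp⟩
  simp only [EE_zero] at i0
  have hN0 := hN (⟨0, hp⟩ : Fin p).rev
  omega

end PPart

namespace PPart

variable {p : ℕ} {π : Equiv.Perm (Fin p)}

theorem bval_uval (hp : 0 < p) {σ' : Fin p → ℕ} (hc : Compat π σ') {w : Fin p → ℕ}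
    (hw : ∀ j : Fin p, w j = uval π σ' j.rev) (k : Fin p) :
    bval π w k = σ' (π k) := by
  have h1 : w k.rev = uval π σ' k := by rw [hw k.rev, Fin.rev_rev]
  have h2 := uval_invariant hp hc k
  have h4 := EE_le_val hp hc k.isLt
  rw [Fin.eta] at h4
  have h3 := k.isLt
  show w k.rev + EE π (k : ℕ) - (p - 1 - (k : ℕ)) = σ' (π k)
  rw [h1]
  generalize hX : uval π σ' k = X at h2
  generalize hE : EE π (k : ℕ) = E at h2 h4
  generalize hS : σ' (π k) = S at h2 h4
  omega

theorem uval_bval {w : Fin p → ℕ} (hw : StrictMono w) (k : Fin p) :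
    uval π (fun i => bval π w (π.symm i)) k = w k.rev := by
  have h1 := strictMono_le_apply hw k.rev
  have h2 : ((k.rev : Fin p) : ℕ) = p - ((k : ℕ) + 1) := Fin.val_rev k
  have h3 := k.isLt
  show (fun i => bval π w (π.symm i)) (π k) + (p - 1 - (k : ℕ)) - EE π (k : ℕ) = w k.rev
  simp only [Equiv.symm_apply_apply]
  show w k.rev + EE π (k : ℕ) - (p - 1 - (k : ℕ)) + (p - 1 - (k : ℕ)) - EE π (k : ℕ) = w k.rev
  generalize hW : w k.rev = W at h1
  generalize hE : EE π (k : ℕ) = E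
  omega

/-- The uval values of a compat family, as a finset. -/
theorem card_compat_eq (hp : 0 < p) (m : ℕ) (hm : (DD π).card + 1 ≤ m) :
    (Finset.univ.filter (fun σ : Fin p → Fin m =>
        Compat π (fun i => ((σ i : ℕ))))).card
      = (m - ((DD π).card + 1) + p).choose p := by
  set N := m - ((DD π).card + 1) + p with hN
  have h2 : (Finset.powersetCard p (Finset.range N)).card = N.choose p := by
    rw [Finset.card_powersetCard, Finset.card_range]
  rw [← h2]
  refine Finset.card_bij
    (fun σ _ => Finset.image (uval π (fun i => ((σ i : ℕ)))) Finset.univ) ?hi ?inj ?surj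
  case hi =>
    intro σ hσ
    have hc : Compat π (fun i => ((σ i : ℕ))) := (Finset.mem_filter.1 hσ).2
    rw [Finset.mem_powersetCard]
    constructor
    · intro x hx
      obtain ⟨k, -, rfl⟩ := Finset.mem_image.1 hx
      exact Finset.mem_range.2 (uval_lt hp hc (fun i => (σ i).isLt) hm k)
    · rw [Finset.card_image_of_injective _ (uval_strictAnti hp hc).injective,
        Finset.card_univ, Fintype.card_fin]
  case inj =>
    intro σ hσ τ hτ heq
    have hcσ : Compat π (fun i => ((σ i : ℕ))) := (Finset.mem_filter.1 hσ).2
    have hcτ : Compat π (fun i => ((τ i : ℕ))) := (Finset.mem_filter.1 hτ).2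
    set σ' : Fin p → ℕ := fun i => ((σ i : ℕ)) with hσ'd
    set τ' : Fin p → ℕ := fun i => ((τ i : ℕ)) with hτ'd
    set s : Finset ℕ := Finset.image (uval π σ') Finset.univ with hsd
    have hcard : s.card = p := by
      rw [hsd, Finset.card_image_of_injective _ (uval_strictAnti hp hcσ).injective,
        Finset.card_univ, Fintype.card_fin]
    have hu1 : (fun j : Fin p => uval π σ' j.rev) = s.orderEmbOfFin hcard :=
      Finset.orderEmbOfFin_unique hcard
        (fun x => Finset.mem_image_of_mem _ (Finset.mem_univ _))
        (fun a b hab => uval_strictAnti hp hcσ (by rwa [Fin.rev_lt_rev]))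
    have hu2 : (fun j : Fin p => uval π τ' j.rev) = s.orderEmbOfFin hcard :=
      Finset.orderEmbOfFin_unique hcard
        (fun x => by
          have heq' : Finset.image (uval π σ') Finset.univ
              = Finset.image (uval π τ') Finset.univ := heq
          rw [hsd, heq']
          exact Finset.mem_image_of_mem _ (Finset.mem_univ _))
        (fun a b hab => uval_strictAnti hp hcτ (by rwa [Fin.rev_lt_rev]))
    have huv : ∀ k : Fin p, uval π σ' k = uval π τ' k := by
      intro k
      have := (congrFun hu1 k.rev).trans (congrFun hu2 k.rev).symm
      rwa [Fin.rev_rev] at this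
    funext i
    apply Fin.ext
    have hk : π (π.symm i) = i := π.apply_symm_apply i
    rw [← hk]
    have i1 := uval_invariant hp hcσ (π.symm i)
    have i2 := uval_invariant hp hcτ (π.symm i)
    have e1 := EE_le_val hp hcσ (π.symm i).isLt
    have e2 := EE_le_val hp hcτ (π.symm i).isLt
    rw [Fin.eta] at e1 e2
    rw [huv (π.symm i)] at i1
    simp only [hσ'd, hτ'd] at i1 i2 e1 e2
    omega
  case surj =>
    intro s hs
    obtain ⟨hsub, hcard⟩ := Finset.mem_powersetCard.1 hs
    have hw : StrictMono (fun j : Fin p => ((s.orderEmbOfFin hcard j : ℕ))) :=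
      (s.orderEmbOfFin hcard).strictMono
    set w : Fin p → ℕ := fun j : Fin p => ((s.orderEmbOfFin hcard j : ℕ)) with hwd
    have hbound : ∀ i : Fin p, bval π w (π.symm i) < m := by
      intro i
      refine bval_lt hp hw hm ?_ (π.symm i)
      intro j
      exact Finset.mem_range.1 (hsub (Finset.orderEmbOfFin_mem s hcard j))
    refine ⟨fun i => (⟨bval π w (π.symm i), hbound i⟩ : Fin m), ?_, ?_⟩
    · rw [Finset.mem_filter]
      refine ⟨Finset.mem_univ _, ?_⟩
      exact bval_compat hw
    · have key : Finset.image (uval π (fun i => bval π w (π.symm i))) Finset.univ = s := by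
        ext x
        simp only [Finset.mem_image, Finset.mem_univ, true_and]
        constructor
        · rintro ⟨k, rfl⟩
          rw [uval_bval hw]
          exact Finset.orderEmbOfFin_mem s hcard k.rev
        · intro hx
          have : x ∈ Set.range (s.orderEmbOfFin hcard) := by
            rw [Finset.range_orderEmbOfFin]
            exact hx
          obtain ⟨j, hj⟩ := this
          refine ⟨j.rev, ?_⟩
          rw [uval_bval hw, Fin.rev_rev]
          exact hj

      exact key

end PPart

namespace PPart

variable {p : ℕ} {π : Equiv.Perm (Fin p)}

theorem card_compat_zero (hp : 0 < p) (m : ℕ) (hm : m < (DD π).card + 1) :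
    (Finset.univ.filter (fun σ : Fin p → Fin m =>
        Compat π (fun i => ((σ i : ℕ))))).card = 0 := by
  rw [Finset.card_eq_zero, Finset.eq_empty_iff_forall_notMem]
  intro σ hσ
  have hc : Compat π (fun i => ((σ i : ℕ))) := (Finset.mem_filter.1 hσ).2
  have h1 := EE_le_val hp hc hp
  rw [EE_zero] at h1
  have h2 := (σ (π ⟨0, hp⟩)).isLt
  omega

theorem orderPolyVal_eq_sum (hp : 0 < p) (P : PartialOrder (Fin p)) (m : ℕ) :
    orderPolyVal p P m = ∑ π ∈ Finset.univ.filter (IsLinExt p P),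
      (Finset.univ.filter (fun σ : Fin p → Fin m =>
        Compat π (fun i => ((σ i : ℕ))))).card := by
  unfold orderPolyVal
  rw [Finset.card_eq_sum_card_fiberwise
    (f := fun σ : Fin p → Fin m => Tuple.sort (key (fun i => ((σ i : ℕ)))))
    (t := Finset.univ.filter (IsLinExt p P))]
  · apply Finset.sum_congr rfl
    intro π hπ
    congr 1
    ext σ
    simp only [Finset.mem_filter, Finset.mem_univ, true_and]
    constructor
    · rintro ⟨hpp, hsort⟩
      rw [← hsort]
      exact compat_sort _
    · intro hc
      have hπL : IsLinExt p P π := (Finset.mem_filter.1 hπ).2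
      exact ⟨ppart_of_compat hπL hc, sort_eq hc⟩
  · intro σ hσ
    have hpp := (Finset.mem_filter.1 hσ).2
    simp only [Finset.mem_filter, Finset.mem_univ, true_and]
    exact Finset.mem_coe.2 (Finset.mem_filter.2 ⟨Finset.mem_univ _, linext_sort hpp⟩)

theorem gf_pi (hp : 0 < p) (π : Equiv.Perm (Fin p)) :
    PowerSeries.mk (fun m => (((Finset.univ.filter (fun σ : Fin p → Fin m =>
        Compat π (fun i => ((σ i : ℕ))))).card : ℤ)))
    = PowerSeries.X ^ ((DD π).card + 1) * (PowerSeries.invOneSubPow ℤ (p+1)).val := by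
  ext n
  rw [PowerSeries.coeff_mk, PowerSeries.invOneSubPow_val_succ_eq_mk_add_choose,
    PowerSeries.coeff_X_pow_mul']
  split
  · rw [PowerSeries.coeff_mk, card_compat_eq hp n (by omega)]
    have h : n - ((DD π).card + 1) + p = p + (n - ((DD π).card + 1)) := by omega
    rw [h]
  · rw [card_compat_zero hp n (by omega)]
    simp

theorem gf_pi' (hp : 0 < p) (π : Equiv.Perm (Fin p)) :
    (1 - PowerSeries.X : PowerSeries ℤ) ^ (p+1) *
      PowerSeries.mk (fun m => (((Finset.univ.filter (fun σ : Fin p → Fin m =>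
        Compat π (fun i => ((σ i : ℕ))))).card : ℤ)))
    = PowerSeries.X ^ (1 + (DD π).card) := by
  rw [gf_pi hp π]
  have hone : (1 - PowerSeries.X : PowerSeries ℤ) ^ (p+1)
      * (PowerSeries.invOneSubPow ℤ (p+1)).val = 1 := by
    rw [← PowerSeries.invOneSubPow_inv_eq_one_sub_pow]
    exact (PowerSeries.invOneSubPow ℤ (p+1)).inv_val
  calc (1 - PowerSeries.X : PowerSeries ℤ) ^ (p+1)
        * (PowerSeries.X ^ ((DD π).card + 1) * (PowerSeries.invOneSubPow ℤ (p+1)).val)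
      = PowerSeries.X ^ ((DD π).card + 1) *
          ((1 - PowerSeries.X : PowerSeries ℤ) ^ (p+1)
            * (PowerSeries.invOneSubPow ℤ (p+1)).val) := by ring
    _ = PowerSeries.X ^ (1 + (DD π).card) := by rw [hone, mul_one, Nat.add_comm]

end PPart

/-- `(1 − t)^{p+1} ⬝ ∑_{m≥0} Ω(P; m) t^m = ∑_{π ∈ L(P)} t^{1 + des π}` in `ℤ[[t]]`. -/
theorem order_polynomial_generating_function (p : ℕ) (hp : 0 < p)
    (P : PartialOrder (Fin p)) :
    (1 - (PowerSeries.X : PowerSeries ℤ)) ^ (p + 1) *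
      PowerSeries.mk (fun m => (orderPolyVal p P m : ℤ)) =
    ∑ π ∈ Finset.univ.filter (IsLinExt p P),
      (PowerSeries.X : PowerSeries ℤ) ^ (1 + (desSet p fun k => ((π k : ℕ))).card) := by
  have h1 : PowerSeries.mk (fun m => (orderPolyVal p P m : ℤ))
      = ∑ π ∈ Finset.univ.filter (IsLinExt p P),
        PowerSeries.mk (fun m => (((Finset.univ.filter (fun σ : Fin p → Fin m =>
          PPart.Compat π (fun i => ((σ i : ℕ))))).card : ℤ))) := by
    ext n
    rw [PowerSeries.coeff_mk, map_sum]
    simp only [PowerSeries.coeff_mk]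
    rw [PPart.orderPolyVal_eq_sum hp P n]
    push_cast
    rfl
  rw [h1, Finset.mul_sum]
  apply Finset.sum_congr rfl
  intro π hπ
  exact PPart.gf_pi' hp π
end

section
/- (Stanley's acyclic orientation theorem.) Let G be a finite simple graph with n vertices, and suppose χ ∈ ℚ[X] is a polynomial such that for every natural number k, χ(k) equals the number of proper colorings of G with colors {1,…,k}. Then (−1)^n · χ(−1) equals the number of acyclic orientations of G. -/
open scoped Classical
open Finset Relation Polynomial

namespace StanleyAO

/-- number of proper colorings with k colors -/
noncomputable def pc (V : Type) [Fintype V] [DecidableEq V] (G : SimpleGraph V) (k : ℕ) : ℕ :=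
  (Finset.univ.filter fun f : V → Fin k => ∀ u v : V, G.Adj u v → f u ≠ f v).card

def IsO {V : Type} (G : SimpleGraph V) (o : V → V → Bool) : Prop :=
  (∀ u v : V, o u v = true → G.Adj u v) ∧
  (∀ u v : V, G.Adj u v → (o u v = true ↔ ¬ o v u = true)) ∧
  (∀ v : V, ¬ Relation.TransGen (fun a b : V => o a b = true) v v)

noncomputable def ac (V : Type) [Fintype V] [DecidableEq V] (G : SimpleGraph V) : ℕ :=
  (Finset.univ.filter fun o : V → V → Bool => IsO G o).card

/-- deletion of the edge uv -/
def Gdel {V : Type} (G : SimpleGraph V) (u v : V) : SimpleGraph V where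
  Adj a b := G.Adj a b ∧ ¬((a = u ∧ b = v) ∨ (a = v ∧ b = u))
  symm := ⟨fun a b => by rintro ⟨h1, h2⟩; exact ⟨h1.symm, by tauto⟩⟩
  loopless := ⟨fun a => by rintro ⟨h1, _⟩; exact G.loopless.irrefl a h1⟩

/-- contraction of the edge uv, on the vertex set V \ {v} -/
def Gcon {V : Type} (G : SimpleGraph V) (u v : V) : SimpleGraph {x : V // x ≠ v} where
  Adj a b := a ≠ b ∧ (G.Adj a.1 b.1 ∨ (a.1 = u ∧ G.Adj v b.1) ∨ (b.1 = u ∧ G.Adj a.1 v))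
  symm := ⟨fun a b => by
    rintro ⟨h1, h2⟩
    refine ⟨h1.symm, ?_⟩
    rcases h2 with h | ⟨h, h'⟩ | ⟨h, h'⟩
    · exact Or.inl h.symm
    · exact Or.inr (Or.inr ⟨h, h'.symm⟩)
    · exact Or.inr (Or.inl ⟨h, h'.symm⟩)⟩
  loopless := ⟨fun a => by rintro ⟨h1, _⟩; exact h1 rfl⟩

lemma Gdel_comm {V : Type} (G : SimpleGraph V) (u v : V) : Gdel G u v = Gdel G v u := by
  ext a b; simp only [Gdel]; tauto

/-- number of ordered adjacent pairs -/
noncomputable def ep (V : Type) [Fintype V] [DecidableEq V] (G : SimpleGraph V) : ℕ :=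
  (Finset.univ.filter fun p : V × V => G.Adj p.1 p.2).card



section
variable {V : Type} [Fintype V] [DecidableEq V] (G : SimpleGraph V) (u v : V)

lemma ep_del_lt (huv : G.Adj u v) : ep V (Gdel G u v) < ep V G := by
  have hsub : (Finset.univ.filter fun p : V × V => (Gdel G u v).Adj p.1 p.2) ⊆
      ((Finset.univ.filter fun p : V × V => G.Adj p.1 p.2).erase (u, v)) := by
    intro p hp
    simp only [mem_filter, mem_univ, true_and] at hp; simp only [Gdel] at hp
    rw [Finset.mem_erase]
    refine ⟨?_, by simp [hp.1]⟩
    rintro rfl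
    exact hp.2 (Or.inl ⟨rfl, rfl⟩)
  calc ep V (Gdel G u v) ≤ _ := Finset.card_le_card hsub
    _ < ep V G := by
      rw [Finset.card_erase_of_mem (by simp [huv])]
      exact Nat.sub_lt (Finset.card_pos.2 ⟨(u, v), by simp [huv]⟩) one_pos

lemma ep_con_le (huv : G.Adj u v) : ep _ (Gcon G u v) ≤ ep V (Gdel G u v) := by
  classical
  set f : ({x : V // x ≠ v} × {x : V // x ≠ v}) → V × V := fun p =>
    if G.Adj p.1.1 p.2.1 then (p.1.1, p.2.1)
    else if p.1.1 = u then (v, p.2.1) else (p.1.1, v) with hf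
  apply Finset.card_le_card_of_injOn f
  · intro p hp
    simp only [coe_filter, Set.mem_setOf_eq, mem_filter, mem_univ, true_and] at hp; simp only [Gcon] at hp
    obtain ⟨hne, hcl⟩ := hp
    have hne1 : p.1.1 ≠ p.2.1 := fun h => hne (Subtype.ext h)
    simp only [coe_filter, Set.mem_setOf_eq, mem_filter, mem_univ, true_and]; simp only [Gdel, hf]
    by_cases h1 : G.Adj p.1.1 p.2.1
    · simp only [if_pos h1]
      exact ⟨h1, by rintro (⟨h, h'⟩ | ⟨h, h'⟩) <;> [exact p.2.2 h'; exact p.1.2 h]⟩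
    · rcases hcl with h | ⟨ha, hb⟩ | ⟨ha, hb⟩
      · exact absurd h h1
      · have hbu : p.2.1 ≠ u := fun h => hne1 (ha.trans h.symm)
        simp only [if_neg h1, if_pos ha]
        exact ⟨hb, by rintro (⟨h, h'⟩ | ⟨h, h'⟩) <;> [exact (G.ne_of_adj huv) h.symm; exact hbu h']⟩
      · have hau : p.1.1 ≠ u := fun h => hne1 (h.trans ha.symm)
        simp only [if_neg h1, if_neg hau]
        exact ⟨hb, by rintro (⟨h, h'⟩ | ⟨h, h'⟩) <;> [exact hau h; exact p.1.2 h]⟩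
  · intro p hp q hq hpq
    simp only [coe_filter, Set.mem_setOf_eq, mem_univ, true_and] at hp hq; simp only [Gcon] at hp hq
    obtain ⟨hnep, hclp⟩ := hp
    obtain ⟨hneq, hclq⟩ := hq
    have key : ∀ r : ({x : V // x ≠ v} × {x : V // x ≠ v}),
        r.1 ≠ r.2 → (G.Adj r.1.1 r.2.1 ∨ (r.1.1 = u ∧ G.Adj v r.2.1) ∨ (r.2.1 = u ∧ G.Adj r.1.1 v)) →
        ((f r).1 ≠ v ∧ (f r).2 ≠ v ∧ r.1.1 = (f r).1 ∧ r.2.1 = (f r).2) ∨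
        ((f r).1 = v ∧ (f r).2 ≠ v ∧ r.1.1 = u ∧ r.2.1 = (f r).2) ∨
        ((f r).1 ≠ v ∧ (f r).2 = v ∧ r.1.1 = (f r).1 ∧ r.2.1 = u) := by
      intro r hne hcl
      have hne1 : r.1.1 ≠ r.2.1 := fun h => hne (Subtype.ext h)
      by_cases h1 : G.Adj r.1.1 r.2.1
      · have hfr : f r = (r.1.1, r.2.1) := by simp only [hf]; rw [if_pos h1]
        exact Or.inl ⟨by rw [hfr]; exact r.1.2, by rw [hfr]; exact r.2.2, by rw [hfr],
          by rw [hfr]⟩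
      · rcases hcl with h | ⟨ha, hb⟩ | ⟨ha, hb⟩
        · exact absurd h h1
        · have hfr : f r = (v, r.2.1) := by simp only [hf]; rw [if_neg h1, if_pos ha]
          exact Or.inr (Or.inl ⟨by rw [hfr], by rw [hfr]; exact r.2.2, ha, by rw [hfr]⟩)
        · have hau : r.1.1 ≠ u := fun h => hne1 (h.trans ha.symm)
          have hfr : f r = (r.1.1, v) := by simp only [hf]; rw [if_neg h1, if_neg hau]
          exact Or.inr (Or.inr ⟨by rw [hfr]; exact r.1.2, by rw [hfr], by rw [hfr], ha⟩)
    have kp := key p hnep hclp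
    have kq := key q hneq hclq
    rw [hpq] at kp
    have e1 : p.1 = q.1 ∧ p.2 = q.2 → p = q := fun ⟨h1, h2⟩ => Prod.ext h1 h2
    apply e1
    rcases kp with ⟨n1, n2, e1p, e2p⟩ | ⟨n1, n2, e1p, e2p⟩ | ⟨n1, n2, e1p, e2p⟩ <;>
      rcases kq with ⟨m1, m2, e1q, e2q⟩ | ⟨m1, m2, e1q, e2q⟩ | ⟨m1, m2, e1q, e2q⟩ <;>
      first
        | (exact absurd m1 n1)
        | (exact absurd n1 m1)
        | (exact absurd m2 n2)
        | (exact absurd n2 m2)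
        | (exact ⟨Subtype.ext (e1p.trans e1q.symm), Subtype.ext (e2p.trans e2q.symm)⟩)

end

section
variable {V : Type} [Fintype V] [DecidableEq V] (G : SimpleGraph V) (u v : V)

lemma pc_split (huv : G.Adj u v) (k : ℕ) :
    pc V (Gdel G u v) k = pc V G k + pc {x : V // x ≠ v} (Gcon G u v) k := by
  classical
  have hne : u ≠ v := G.ne_of_adj huv
  -- split the filter for Gdel on whether f u = f v
  have hsplit := Finset.card_filter_add_card_filter_not (s :=
    (Finset.univ.filter fun f : V → Fin k => ∀ a b : V, (Gdel G u v).Adj a b → f a ≠ f b))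
    (p := fun f : V → Fin k => f u ≠ f v)
  rw [Finset.filter_filter, Finset.filter_filter] at hsplit
  have h1 : (Finset.univ.filter fun f : V → Fin k =>
      (∀ a b : V, (Gdel G u v).Adj a b → f a ≠ f b) ∧ f u ≠ f v) =
      (Finset.univ.filter fun f : V → Fin k => ∀ a b : V, G.Adj a b → f a ≠ f b) := by
    apply Finset.filter_congr
    intro f _
    constructor
    · rintro ⟨hdel, hfuv⟩ a b hab
      by_cases hp : (a = u ∧ b = v) ∨ (a = v ∧ b = u)
      · rcases hp with ⟨rfl, rfl⟩ | ⟨rfl, rfl⟩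
        · exact hfuv
        · exact fun h => hfuv h.symm
      · exact hdel a b ⟨hab, hp⟩
    · intro hG
      exact ⟨fun a b hab => hG a b hab.1, hG u v huv⟩
  have h2 : ((Finset.univ.filter fun f : V → Fin k =>
      (∀ a b : V, (Gdel G u v).Adj a b → f a ≠ f b) ∧ ¬ f u ≠ f v)).card =
      pc {x : V // x ≠ v} (Gcon G u v) k := by
    unfold pc
    apply Finset.card_bij' (i := fun f _ => fun x : {x : V // x ≠ v} => f x.1)
      (j := fun g _ => fun x : V => if h : x = v then g ⟨u, hne⟩ else g ⟨x, h⟩)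
    · -- i maps into target
      intro f hf
      simp only [mem_filter, mem_univ, true_and, not_not] at hf ⊢
      obtain ⟨hdel, hfe⟩ := hf
      rintro a b ⟨hab, hcl⟩
      rcases hcl with h | ⟨ha, hb⟩ | ⟨ha, hb⟩
      · exact hdel a.1 b.1 ⟨h, by rintro (⟨h1, h2⟩ | ⟨h1, h2⟩) <;> [exact b.2 h2; exact a.2 h1]⟩
      · have hbu : b.1 ≠ u := fun h => hab (Subtype.ext (ha.trans h.symm))
        have := hdel v b.1 ⟨hb, by rintro (⟨h1, h2⟩ | ⟨h1, h2⟩) <;> [exact hne h1.symm; exact hbu h2]⟩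
        simpa only [ha, hfe] using this
      · have hau : a.1 ≠ u := fun h => hab (Subtype.ext (h.trans ha.symm))
        have := hdel a.1 v ⟨hb, by rintro (⟨h1, h2⟩ | ⟨h1, h2⟩) <;> [exact hau h1; exact a.2 h1]⟩
        intro hcon
        exact this (by rwa [ha, hfe] at hcon)
    · -- j maps into source
      intro g hg
      simp only [mem_filter, mem_univ, true_and, not_not] at hg ⊢
      constructor
      · rintro a b ⟨hab, hp⟩
        by_cases hav : a = v <;> by_cases hbv : b = v
        · exact absurd (hav.trans hbv.symm) (G.ne_of_adj hab)
        · -- a = v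
          subst hav
          have hbu : b ≠ u := fun h => hp (Or.inr ⟨rfl, h⟩)
          simp only [dif_pos rfl, dif_neg hbv]
          exact hg ⟨u, hne⟩ ⟨b, hbv⟩ ⟨fun h => hbu (congrArg Subtype.val h).symm,
            Or.inr (Or.inl ⟨rfl, hab⟩)⟩
        · subst hbv
          have hau : a ≠ u := fun h => hp (Or.inl ⟨h, rfl⟩)
          simp only [dif_pos rfl, dif_neg hav]
          exact hg ⟨a, hav⟩ ⟨u, hne⟩ ⟨fun h => hau (congrArg Subtype.val h),
            Or.inr (Or.inr ⟨rfl, hab⟩)⟩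
        · simp only [dif_neg hav, dif_neg hbv]
          exact hg ⟨a, hav⟩ ⟨b, hbv⟩ ⟨fun h => (G.ne_of_adj hab) (congrArg Subtype.val h),
            Or.inl hab⟩
      · simp [hne]
    · -- left inverse
      intro f hf
      simp only [mem_filter, mem_univ, true_and, not_not] at hf
      funext x
      by_cases hx : x = v
      · subst hx; rw [dif_pos rfl]; exact hf.2
      · rw [dif_neg hx]
    · -- right inverse
      intro g hg
      funext x
      show dite _ _ _ = g x
      rw [dif_neg x.2]
  rw [h1, h2] at hsplit
  unfold pc
  exact hsplit.symm

end


section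
variable {V : Type} {r : V → V → Prop} {u v : V}

/-- adding the arc u→v to a relation: decomposition of paths -/
lemma addArc_decomp {x y : V}
    (h : TransGen (fun a b => r a b ∨ (a = u ∧ b = v)) x y) :
    TransGen r x y ∨ (ReflTransGen r x u ∧ ReflTransGen r v y) := by
  induction h with
  | single hstep =>
    rcases hstep with h | ⟨rfl, rfl⟩
    · exact Or.inl (TransGen.single h)
    · exact Or.inr ⟨ReflTransGen.refl, ReflTransGen.refl⟩
  | tail _ hstep IH =>
    rename_i b c _
    rcases hstep with h | ⟨rfl, rfl⟩
    · rcases IH with H | ⟨H1, H2⟩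
      · exact Or.inl (H.tail h)
      · exact Or.inr ⟨H1, H2.tail h⟩
    · rcases IH with H | ⟨H1, _⟩
      · exact Or.inr ⟨H.to_reflTransGen, ReflTransGen.refl⟩
      · exact Or.inr ⟨H1, ReflTransGen.refl⟩

/-- the collapsed relation identifying u (kept) and v (removed) -/
def colRel (r : V → V → Prop) (u v : V) : V → V → Prop := fun x y =>
  ∃ a b, (a = x ∨ (x = u ∧ a = v)) ∧ (b = y ∨ (y = u ∧ b = v)) ∧ r a b

lemma collapse_decomp (hax : ∀ x, ¬ TransGen r x x)
    (huv : ¬ TransGen r u v) (hvu : ¬ TransGen r v u) {x y : V}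
    (h : TransGen (colRel r u v) x y) :
    (∃ a b, (a = x ∨ (x = u ∧ a = v)) ∧ (b = y ∨ (y = u ∧ b = v)) ∧ TransGen r a b) ∨
    (∃ a b, (a = x ∨ (x = u ∧ a = v)) ∧ (b = y ∨ (y = u ∧ b = v)) ∧
      TransGen r a u ∧ TransGen r v b) ∨
    (∃ a b, (a = x ∨ (x = u ∧ a = v)) ∧ (b = y ∨ (y = u ∧ b = v)) ∧
      TransGen r a v ∧ TransGen r u b) := by
  -- helper: matching of midpoints
  have mid : ∀ {w : V} {b c : V}, (b = w ∨ (w = u ∧ b = v)) → (c = w ∨ (w = u ∧ c = v)) →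
      b = c ∨ (b = u ∧ c = v) ∨ (b = v ∧ c = u) := by
    rintro w b c (hb1 | ⟨hbw, hbv⟩) (hc1 | ⟨hcw, hcv⟩)
    · exact Or.inl (hb1.trans hc1.symm)
    · exact Or.inr (Or.inl ⟨hb1.trans hcw, hcv⟩)
    · exact Or.inr (Or.inr ⟨hbv, hc1.trans hbw⟩)
    · exact Or.inl (hbv.trans hcv.symm)
  induction h with
  | single hstep =>
    obtain ⟨a, b, ha, hb, hr⟩ := hstep
    exact Or.inl ⟨a, b, ha, hb, TransGen.single hr⟩
  | tail _ hstep IH =>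
    obtain ⟨c, d, hc, hd, hr⟩ := hstep
    rcases IH with ⟨a, b, ha, hb, H⟩ | ⟨a, b, ha, hb, H1, H2⟩ | ⟨a, b, ha, hb, H1, H2⟩
    · rcases mid hb hc with heq | ⟨hbu, hcv⟩ | ⟨hbv, hcu⟩
      · exact Or.inl ⟨a, d, ha, hd, H.tail (heq ▸ hr)⟩
      · exact Or.inr (Or.inl ⟨a, d, ha, hd, hbu ▸ H, TransGen.single (hcv ▸ hr)⟩)
      · exact Or.inr (Or.inr ⟨a, d, ha, hd, hbv ▸ H, TransGen.single (hcu ▸ hr)⟩)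
    · rcases mid hb hc with heq | ⟨hbu, hcv⟩ | ⟨hbv, hcu⟩
      · exact Or.inr (Or.inl ⟨a, d, ha, hd, H1, H2.tail (heq ▸ hr)⟩)
      · exact absurd (hbu ▸ H2) hvu
      · exact absurd (hbv ▸ H2) (hax v)
    · rcases mid hb hc with heq | ⟨hbu, hcv⟩ | ⟨hbv, hcu⟩
      · exact Or.inr (Or.inr ⟨a, d, ha, hd, H1, H2.tail (heq ▸ hr)⟩)
      · exact absurd (hbu ▸ H2) (hax u)
      · exact absurd (hbv ▸ H2) huv

lemma collapse_no_cycle (hax : ∀ x, ¬ TransGen r x x)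
    (huv : ¬ TransGen r u v) (hvu : ¬ TransGen r v u) (x : V) :
    ¬ TransGen (colRel r u v) x x := by
  intro h
  rcases collapse_decomp hax huv hvu h with
    ⟨a, b, ha, hb, H⟩ | ⟨a, b, ha, hb, H1, H2⟩ | ⟨a, b, ha, hb, H1, H2⟩
  · rcases ha with rfl | ⟨rfl, rfl⟩
    · rcases hb with rfl | ⟨rfl, rfl⟩
      · exact hax _ H
      · exact huv H
    · rcases hb with rfl | ⟨h2, rfl⟩
      · exact hvu H
      · exact hax _ H
  · rcases ha with rfl | ⟨rfl, rfl⟩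
    · rcases hb with rfl | ⟨rfl, rfl⟩
      · exact hvu (H2.trans H1)
      · exact hax _ H1
    · exact hvu H1
  · rcases ha with rfl | ⟨rfl, rfl⟩
    · rcases hb with rfl | ⟨rfl, rfl⟩
      · exact huv (H2.trans H1)
      · exact huv H1
    · exact hax _ H1

end

section
variable {V : Type} [Fintype V] [DecidableEq V]

noncomputable def delo (o : V → V → Bool) (u v : V) : V → V → Bool :=
  fun a b => decide (o a b = true ∧ ¬((a = u ∧ b = v) ∨ (a = v ∧ b = u)))

noncomputable def exto (o : V → V → Bool) (u v : V) : V → V → Bool :=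
  fun a b => decide (o a b = true ∨ (a = u ∧ b = v))

@[simp] lemma delo_eq {o : V → V → Bool} {u v a b : V} :
    delo o u v a b = true ↔ (o a b = true ∧ ¬((a = u ∧ b = v) ∨ (a = v ∧ b = u))) := by
  simp only [delo, decide_eq_true_iff]

@[simp] lemma exto_eq {o : V → V → Bool} {u v a b : V} :
    exto o u v a b = true ↔ (o a b = true ∨ (a = u ∧ b = v)) := by
  simp only [exto, decide_eq_true_iff]

variable {G : SimpleGraph V} {u v : V}

lemma delo_mem {o : V → V → Bool} (ho : IsO G o) (ho1 : o u v = true) :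
    IsO (Gdel G u v) (delo o u v) ∧
      ¬ TransGen (fun a b => delo o u v a b = true) v u := by
  obtain ⟨hsupp, hone, hacy⟩ := ho
  have hmono : ∀ {x y : V}, TransGen (fun a b => delo o u v a b = true) x y →
      TransGen (fun a b => o a b = true) x y :=
    fun h => h.lift id (fun a b hab => (delo_eq.1 hab).1)
  have hvu : ¬ TransGen (fun a b => delo o u v a b = true) v u := by
    intro h
    exact hacy u ((TransGen.single (r := fun a b => o a b = true) ho1).trans (hmono h))
  refine ⟨⟨?_, ?_, ?_⟩, hvu⟩
  · intro a b hab
    obtain ⟨h1, h2⟩ := delo_eq.1 hab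
    exact ⟨hsupp a b h1, h2⟩
  · rintro a b ⟨hab, hp⟩
    have hp' : ¬((b = u ∧ a = v) ∨ (b = v ∧ a = u)) := by tauto
    simp only [delo_eq, hp, hp', not_false_iff, and_true]
    exact hone a b hab
  · intro x h
    exact hacy x (hmono h)

lemma exto_mem {o : V → V → Bool} (huv : G.Adj u v) (ho : IsO (Gdel G u v) o)
    (hnp : ¬ TransGen (fun a b => o a b = true) v u) :
    IsO G (exto o u v) ∧ exto o u v u v = true := by
  obtain ⟨hsupp, hone, hacy⟩ := ho
  have hne : u ≠ v := G.ne_of_adj huv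
  have hovu : o v u = false := by
    rw [Bool.eq_false_iff]
    intro h
    exact (hsupp v u h).2 (Or.inr ⟨rfl, rfl⟩)
  have houv : o u v = false := by
    rw [Bool.eq_false_iff]
    intro h
    exact (hsupp u v h).2 (Or.inl ⟨rfl, rfl⟩)
  refine ⟨⟨?_, ?_, ?_⟩, exto_eq.2 (Or.inr ⟨rfl, rfl⟩)⟩
  · rintro a b hab
    rcases exto_eq.1 hab with h | ⟨rfl, rfl⟩
    · exact (hsupp a b h).1
    · exact huv
  · intro a b hab
    by_cases hp : (a = u ∧ b = v) ∨ (a = v ∧ b = u)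
    · rcases hp with ⟨ha, hb⟩ | ⟨ha, hb⟩ <;> rw [ha, hb]
      · simp only [exto_eq, houv, hovu, hne]
        tauto
      · have hvu' : ¬ (v = u) := fun h => hne h.symm
        simp only [exto_eq, houv, hovu, hvu']
        tauto
    · have hp1 : ¬(a = u ∧ b = v) := fun h => hp (Or.inl h)
      have hp2 : ¬(b = u ∧ a = v) := fun h => hp (Or.inr ⟨h.2, h.1⟩)
      simp only [exto_eq, hp1, hp2, or_false]
      exact hone a b ⟨hab, hp⟩
  · intro x h
    have h' : TransGen (fun a b => o a b = true ∨ (a = u ∧ b = v)) x x :=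
      h.lift id (fun a b hab => exto_eq.1 hab)
    rcases addArc_decomp h' with H | ⟨H1, H2⟩
    · exact hacy x H
    · have : ReflTransGen (fun a b => o a b = true) v u := H2.trans H1
      rcases (Relation.reflTransGen_iff_eq_or_transGen.1 this) with h1 | h2
      · exact hne h1
      · exact hnp h2

lemma delo_exto {o : V → V → Bool} (ho : IsO (Gdel G u v) o) :
    delo (exto o u v) u v = o := by
  funext a b
  by_cases hp : (a = u ∧ b = v) ∨ (a = v ∧ b = u)
  · have : o a b = false := by
      rw [Bool.eq_false_iff]
      intro h
      exact (ho.1 a b h).2 hp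
    rw [this]
    simp [delo, hp]
  · have h2 : ¬(a = u ∧ b = v) := fun h => hp (Or.inl h)
    have h3 : ¬(a = v ∧ b = u) := fun h => hp (Or.inr h)
    rcases Bool.eq_false_or_eq_true (o a b) with h | h <;>
      simp [delo, exto, hp, h2, h3, h]

lemma exto_delo {o : V → V → Bool} (ho : IsO G o) (huv : G.Adj u v) (ho1 : o u v = true) :
    exto (delo o u v) u v = o := by
  have hovu : o v u = false := by
    rw [Bool.eq_false_iff]
    rw [ho.2.1 u v huv] at ho1
    exact ho1
  funext a b
  by_cases h1 : a = u ∧ b = v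
  · obtain ⟨rfl, rfl⟩ := h1
    simp [exto, ho1]
  · by_cases h2 : a = v ∧ b = u
    · obtain ⟨rfl, rfl⟩ := h2
      rw [hovu]
      show decide _ = false
      apply decide_eq_false
      rintro (h | ⟨h, -⟩)
      · exact (delo_eq.1 h).2 (Or.inr ⟨rfl, rfl⟩)
      · exact (G.ne_of_adj huv) h.symm
    · rcases Bool.eq_false_or_eq_true (o a b) with h | h <;>
        simp [exto, delo, h1, h2, h]

lemma cardAplus (huv : G.Adj u v) :
    (Finset.univ.filter fun o : V → V → Bool => IsO G o ∧ o u v = true).card =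
    (Finset.univ.filter fun o : V → V → Bool =>
      IsO (Gdel G u v) o ∧ ¬ TransGen (fun a b => o a b = true) v u).card := by
  apply Finset.card_bij' (i := fun o _ => delo o u v) (j := fun o _ => exto o u v)
  · intro o ho
    simp only [mem_filter, mem_univ, true_and] at ho ⊢
    exact delo_mem ho.1 ho.2
  · intro o ho
    simp only [mem_filter, mem_univ, true_and] at ho ⊢
    obtain ⟨h1, h2⟩ := exto_mem huv ho.1 ho.2
    exact ⟨h1, h2⟩
  · intro o ho
    simp only [mem_filter, mem_univ, true_and] at ho
    exact exto_delo ho.1 huv ho.2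
  · intro o ho
    simp only [mem_filter, mem_univ, true_and] at ho
    exact delo_exto ho.1

end


section
variable {V : Type} [Fintype V] [DecidableEq V]

noncomputable def conto (o : V → V → Bool) (u v : V) :
    {x : V // x ≠ v} → {x : V // x ≠ v} → Bool :=
  fun x y => decide (o x.1 y.1 = true ∨ (x.1 = u ∧ o v y.1 = true) ∨ (y.1 = u ∧ o x.1 v = true))

@[simp] lemma conto_eq {o : V → V → Bool} {u v : V} {x y : {x : V // x ≠ v}} :
    conto o u v x y = true ↔
      (o x.1 y.1 = true ∨ (x.1 = u ∧ o v y.1 = true) ∨ (y.1 = u ∧ o x.1 v = true)) := by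
  simp only [conto, decide_eq_true_iff]

noncomputable def fsub {u v : V} (hne : u ≠ v) : V → {x : V // x ≠ v} :=
  fun a => if h : a = v then ⟨u, hne⟩ else ⟨a, h⟩

lemma fsub_coe {u v : V} (hne : u ≠ v) (x : {x : V // x ≠ v}) : fsub hne x.1 = x := by
  simp only [fsub, dif_neg x.2]

lemma fsub_v {u v : V} (hne : u ≠ v) : fsub hne v = ⟨u, hne⟩ := by
  simp [fsub]

lemma fsub_of_ne {u v : V} (hne : u ≠ v) {a : V} (h : a ≠ v) : fsub hne a = ⟨a, h⟩ := by
  simp only [fsub, dif_neg h]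

noncomputable def lifto (G : SimpleGraph V) (u v : V) (hne : u ≠ v)
    (o : {x : V // x ≠ v} → {x : V // x ≠ v} → Bool) : V → V → Bool :=
  fun a b => decide ((Gdel G u v).Adj a b ∧ o (fsub hne a) (fsub hne b) = true)

@[simp] lemma lifto_eq {G : SimpleGraph V} {u v : V} {hne : u ≠ v}
    {o : {x : V // x ≠ v} → {x : V // x ≠ v} → Bool} {a b : V} :
    lifto G u v hne o a b = true ↔
      ((Gdel G u v).Adj a b ∧ o (fsub hne a) (fsub hne b) = true) := by
  simp only [lifto, decide_eq_true_iff]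

variable {G : SimpleGraph V} {u v : V}

lemma subne {x y : {x : V // x ≠ v}} (h : x.1 ≠ y.1) : x ≠ y :=
  fun he => h (congrArg Subtype.val he)

lemma conto_mem {o : V → V → Bool} (huv : G.Adj u v)
    (ho : IsO (Gdel G u v) o)
    (hnvu : ¬ TransGen (fun a b => o a b = true) v u)
    (hnuv : ¬ TransGen (fun a b => o a b = true) u v) :
    IsO (Gcon G u v) (conto o u v) := by
  obtain ⟨hsupp, hone, hacy⟩ := ho
  have hne : u ≠ v := G.ne_of_adj huv
  -- support
  have csupp : ∀ x y : {x : V // x ≠ v}, conto o u v x y = true → (Gcon G u v).Adj x y := by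
    intro x y h
    rcases conto_eq.1 h with h1 | ⟨hx, h2⟩ | ⟨hy, h3⟩
    · obtain ⟨hadj, _⟩ := hsupp _ _ h1
      exact ⟨subne (G.ne_of_adj hadj), Or.inl hadj⟩
    · obtain ⟨hadj, hp⟩ := hsupp _ _ h2
      have : y.1 ≠ u := fun h => hp (Or.inr ⟨rfl, h⟩)
      exact ⟨subne (by rw [hx]; exact this.symm), Or.inr (Or.inl ⟨hx, hadj⟩)⟩
    · obtain ⟨hadj, hp⟩ := hsupp _ _ h3
      have : x.1 ≠ u := fun h => hp (Or.inl ⟨h, rfl⟩)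
      exact ⟨subne (by rw [hy]; exact this), Or.inr (Or.inr ⟨hy, hadj⟩)⟩
  -- no two directions simultaneously
  have step : ∀ {a b : V}, o a b = true →
      TransGen (fun a b : V => o a b = true) a b := fun h => TransGen.single h
  have P1 : ∀ x y : {x : V // x ≠ v}, x ≠ y →
      conto o u v x y = true → conto o u v y x = true → False := by
    intro x y hxy hf hb
    rcases conto_eq.1 hf with h1 | ⟨hx, h2⟩ | ⟨hy, h3⟩ <;>
      rcases conto_eq.1 hb with g1 | ⟨gy, g2⟩ | ⟨gx, g3⟩
    · exact ((hone _ _ (hsupp _ _ h1)).1 h1) g1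
    · -- o x y ; y = u ∧ o v x : v → x → y = u
      exact hnvu ((step g2).tail (gy ▸ h1))
    · -- o x y ; x = u ∧ o y v : u = x → y → v
      exact hnuv ((step (gx ▸ h1 : o u y.1 = true)).tail g3)
    · -- x = u ∧ o v y ; o y x : v → y → x = u
      exact hnvu ((step h2).tail (hx ▸ g1))
    · -- x = u ∧ o v y ; y = u ∧ o v x : x = y = u
      exact hxy (Subtype.ext (hx.trans gy.symm))
    · -- x = u ∧ o v y ; x = u ∧ o y v : v → y → v
      exact hacy v ((step h2).tail g3)
    · -- y = u ∧ o x v ; o y x : u = y → x → v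
      exact hnuv ((step (hy ▸ g1 : o u x.1 = true)).tail h3)
    · -- y = u ∧ o x v ; y = u ∧ o v x : v → x → v
      exact hacy v ((step g2).tail h3)
    · -- y = u ∧ o x v ; x = u ∧ o y v : x = y = u
      exact hxy (Subtype.ext (gx.trans hy.symm))
  have tot : ∀ a b, (Gdel G u v).Adj a b → o a b = true ∨ o b a = true := by
    intro a b hdel
    by_cases h : o a b = true
    · exact Or.inl h
    · exact Or.inr (not_not.1 ((not_iff_not.2 (hone a b hdel)).1 h))
  -- totality on edges
  have P2 : ∀ x y : {x : V // x ≠ v}, (Gcon G u v).Adj x y →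
      conto o u v x y = true ∨ conto o u v y x = true := by
    rintro x y ⟨hxy, hcl⟩
    have hxy1 : x.1 ≠ y.1 := fun h => hxy (Subtype.ext h)
    rcases hcl with h | ⟨hx, h⟩ | ⟨hy, h⟩
    · have hdel : (Gdel G u v).Adj x.1 y.1 := ⟨h, by
        rintro (⟨h1, h2⟩ | ⟨h1, h2⟩) <;> [exact y.2 h2; exact x.2 h1]⟩
      rcases tot _ _ hdel with hh | hh
      · exact Or.inl (conto_eq.2 (Or.inl hh))
      · exact Or.inr (conto_eq.2 (Or.inl hh))
    · have hyu : y.1 ≠ u := fun hc => hxy1 (hx.trans hc.symm)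
      have hdel : (Gdel G u v).Adj v y.1 := ⟨h, by
        rintro (⟨h1, h2⟩ | ⟨h1, h2⟩) <;> [exact hne h1.symm; exact hyu h2]⟩
      rcases tot _ _ hdel with hh | hh
      · exact Or.inl (conto_eq.2 (Or.inr (Or.inl ⟨hx, hh⟩)))
      · exact Or.inr (conto_eq.2 (Or.inr (Or.inr ⟨hx, hh⟩)))
    · have hxu : x.1 ≠ u := fun hc => hxy1 (hc.trans hy.symm)
      have hdel : (Gdel G u v).Adj x.1 v := ⟨h, by
        rintro (⟨h1, h2⟩ | ⟨h1, h2⟩) <;> [exact hxu h1; exact x.2 h1]⟩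
      rcases tot _ _ hdel with hh | hh
      · exact Or.inl (conto_eq.2 (Or.inr (Or.inr ⟨hy, hh⟩)))
      · exact Or.inr (conto_eq.2 (Or.inr (Or.inl ⟨hy, hh⟩)))
  refine ⟨csupp, ?_, ?_⟩
  · intro x y hadj
    constructor
    · intro h hcon
      exact P1 x y hadj.ne h hcon
    · intro h
      rcases P2 x y hadj with h1 | h1
      · exact h1
      · exact absurd h1 h
  · -- acyclicity via collapse
    intro x hcyc
    have hlift : ∀ a b : {x : V // x ≠ v}, conto o u v a b = true →
        colRel (fun s t => o s t = true) u v a.1 b.1 := by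
      intro a b h
      rcases conto_eq.1 h with h1 | ⟨ha, h2⟩ | ⟨hb, h3⟩
      · exact ⟨a.1, b.1, Or.inl rfl, Or.inl rfl, h1⟩
      · exact ⟨v, b.1, Or.inr ⟨ha, rfl⟩, Or.inl rfl, h2⟩
      · exact ⟨a.1, v, Or.inl rfl, Or.inr ⟨hb, rfl⟩, h3⟩
    have := (hcyc.lift Subtype.val (fun a b h => hlift a b h))
    exact collapse_no_cycle hacy hnuv hnvu x.1 this


lemma gdel_to_gcon (huv : G.Adj u v) {a b : V} (h : (Gdel G u v).Adj a b) :
    (Gcon G u v).Adj (fsub (G.ne_of_adj huv) a) (fsub (G.ne_of_adj huv) b) := by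
  have hne : u ≠ v := G.ne_of_adj huv
  obtain ⟨hadj, hp⟩ := h
  by_cases hav : a = v <;> by_cases hbv : b = v
  · exact absurd (hav.trans hbv.symm) (G.ne_of_adj hadj)
  · subst hav
    have hbu : b ≠ u := fun h => hp (Or.inr ⟨rfl, h⟩)
    rw [fsub_v, fsub_of_ne hne hbv]
    exact ⟨fun h => hbu (congrArg Subtype.val h).symm, Or.inr (Or.inl ⟨rfl, hadj⟩)⟩
  · subst hbv
    have hau : a ≠ u := fun h => hp (Or.inl ⟨h, rfl⟩)
    rw [fsub_v, fsub_of_ne hne hav]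
    exact ⟨fun h => hau (congrArg Subtype.val h), Or.inr (Or.inr ⟨rfl, hadj⟩)⟩
  · rw [fsub_of_ne hne hav, fsub_of_ne hne hbv]
    exact ⟨fun h => (G.ne_of_adj hadj) (congrArg Subtype.val h), Or.inl hadj⟩

lemma lifto_mem (huv : G.Adj u v) {o : {x : V // x ≠ v} → {x : V // x ≠ v} → Bool}
    (ho : IsO (Gcon G u v) o) :
    IsO (Gdel G u v) (lifto G u v (G.ne_of_adj huv) o) ∧
      ¬ TransGen (fun a b => lifto G u v (G.ne_of_adj huv) o a b = true) v u ∧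
      ¬ TransGen (fun a b => lifto G u v (G.ne_of_adj huv) o a b = true) u v := by
  obtain ⟨hsupp, hone, hacy⟩ := ho
  have hne : u ≠ v := G.ne_of_adj huv
  have hlift : ∀ {x y : V},
      TransGen (fun a b => lifto G u v hne o a b = true) x y →
      TransGen (fun a b => o a b = true) (fsub hne x) (fsub hne y) :=
    fun h => h.lift (fsub hne) (fun a b hab => (lifto_eq.1 hab).2)
  refine ⟨⟨?_, ?_, ?_⟩, ?_, ?_⟩
  · intro a b hab
    exact (lifto_eq.1 hab).1
  · intro a b hab
    have h2 := hone _ _ (gdel_to_gcon huv hab)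
    simp only [lifto_eq, hab, hab.symm, true_and]
    exact h2
  · intro x h
    exact hacy (fsub hne x) (hlift h)
  · intro h
    have := hlift h
    rw [fsub_v, fsub_of_ne hne hne] at this
    exact hacy _ this
  · intro h
    have := hlift h
    rw [fsub_v, fsub_of_ne hne hne] at this
    exact hacy _ this

lemma lifto_conto (huv : G.Adj u v) {o : V → V → Bool}
    (ho : IsO (Gdel G u v) o)
    (hnvu : ¬ TransGen (fun a b => o a b = true) v u)
    (hnuv : ¬ TransGen (fun a b => o a b = true) u v) :
    lifto G u v (G.ne_of_adj huv) (conto o u v) = o := by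
  obtain ⟨hsupp, hone, hacy⟩ := ho
  have hne : u ≠ v := G.ne_of_adj huv
  have step : ∀ {a b : V}, o a b = true →
      TransGen (fun a b : V => o a b = true) a b := fun h => TransGen.single h
  have tot : ∀ a b, (Gdel G u v).Adj a b → o a b = true ∨ o b a = true := by
    intro a b hdel
    by_cases h : o a b = true
    · exact Or.inl h
    · exact Or.inr (not_not.1 ((not_iff_not.2 (hone a b hdel)).1 h))
  funext a b
  rcases (Bool.eq_false_or_eq_true (o a b)).symm with hoab | hoab
  · -- o a b = false : show lifto ... = false
    rw [hoab]
    show decide _ = false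
    apply decide_eq_false
    rintro ⟨hadj, hcon⟩
    have hoab' : ¬ o a b = true := by rw [hoab]; simp
    by_cases hav : a = v <;> by_cases hbv : b = v
    · exact absurd (hav.trans hbv.symm) (G.ne_of_adj hadj.1)
    · -- a = v
      rw [hav] at hadj hcon hoab'
      rw [fsub_v, fsub_of_ne hne hbv] at hcon
      rcases conto_eq.1 hcon with h1 | ⟨h2a, h2⟩ | ⟨h3a, h3⟩
      · -- o u b ; also o b v since edge v-b and ¬ o v b
        have : o b v = true := (tot _ _ hadj).resolve_left hoab'
        exact hnuv ((step h1).tail this)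
      · exact hoab' h2
      · exact hadj.2 (Or.inr ⟨rfl, h3a⟩)
    · -- b = v
      rw [hbv] at hadj hcon hoab'
      rw [fsub_v, fsub_of_ne hne hav] at hcon
      rcases conto_eq.1 hcon with h1 | ⟨h2a, h2⟩ | ⟨h3a, h3⟩
      · -- o a u ; also o v a since edge a-v and ¬ o a v
        have : o v a = true := (tot _ _ hadj).resolve_left hoab'
        exact hnvu ((step this).tail h1)
      · exact hadj.2 (Or.inl ⟨h2a, rfl⟩)
      · exact hoab' h3
    · rw [fsub_of_ne hne hav, fsub_of_ne hne hbv] at hcon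
      rcases conto_eq.1 hcon with h1 | ⟨h2a, h2⟩ | ⟨h3a, h3⟩
      · exact hoab' h1
      · -- a = u, o v b ; edge u-b, ¬ o u b so o b u ; v→b→u
        have h2a' : a = u := h2a
        have h2' : o v b = true := h2
        rw [h2a'] at hadj hoab'
        have : o b u = true := (tot _ _ hadj).resolve_left hoab'
        exact hnvu ((step h2').tail this)
      · -- b = u, o a v ; edge a-u, ¬ o a u so o u a ; u→a→v
        have h3a' : b = u := h3a
        have h3' : o a v = true := h3
        rw [h3a'] at hadj hoab'
        have : o u a = true := (tot _ _ hadj).resolve_left hoab'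
        exact hnuv ((step this).tail h3')
  · -- o a b = true : show lifto ... = true
    rw [hoab]
    have hadj : (Gdel G u v).Adj a b := hsupp _ _ hoab
    show decide _ = true
    rw [decide_eq_true_iff]
    refine ⟨hadj, ?_⟩
    by_cases hav : a = v <;> by_cases hbv : b = v
    · exact absurd (hav.trans hbv.symm) (G.ne_of_adj hadj.1)
    · rw [hav, fsub_v, fsub_of_ne hne hbv]
      exact conto_eq.2 (Or.inr (Or.inl ⟨rfl, hav ▸ hoab⟩))
    · rw [hbv, fsub_v, fsub_of_ne hne hav]
      exact conto_eq.2 (Or.inr (Or.inr ⟨rfl, hbv ▸ hoab⟩))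
    · rw [fsub_of_ne hne hav, fsub_of_ne hne hbv]
      exact conto_eq.2 (Or.inl hoab)

lemma conto_lifto (huv : G.Adj u v) {o : {x : V // x ≠ v} → {x : V // x ≠ v} → Bool}
    (ho : IsO (Gcon G u v) o) :
    conto (lifto G u v (G.ne_of_adj huv) o) u v = o := by
  obtain ⟨hsupp, hone, hacy⟩ := ho
  have hne : u ≠ v := G.ne_of_adj huv
  funext x y
  rcases (Bool.eq_false_or_eq_true (o x y)).symm with ho2 | ho2
  · rw [ho2]
    show decide _ = false
    apply decide_eq_false
    rintro (h1 | ⟨h2a, h2⟩ | ⟨h3a, h3⟩)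
    · obtain ⟨-, hc⟩ := lifto_eq.1 h1
      rw [fsub_coe, fsub_coe, ho2] at hc
      exact Bool.false_ne_true hc
    · obtain ⟨-, hc⟩ := lifto_eq.1 h2
      rw [fsub_v, fsub_coe,
        show (⟨u, hne⟩ : {x : V // x ≠ v}) = x from Subtype.ext h2a.symm, ho2] at hc
      exact Bool.false_ne_true hc
    · obtain ⟨-, hc⟩ := lifto_eq.1 h3
      rw [fsub_v, fsub_coe,
        show (⟨u, hne⟩ : {x : V // x ≠ v}) = y from Subtype.ext h3a.symm, ho2] at hc
      exact Bool.false_ne_true hc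
  · rw [ho2]
    show decide _ = true
    rw [decide_eq_true_iff]
    obtain ⟨hxy, hcl⟩ := hsupp _ _ ho2
    have hxy1 : x.1 ≠ y.1 := fun h => hxy (Subtype.ext h)
    rcases hcl with h | ⟨hx, h⟩ | ⟨hy, h⟩
    · refine Or.inl (lifto_eq.2 ⟨⟨h, ?_⟩, ?_⟩)
      · rintro (⟨h1, h2⟩ | ⟨h1, h2⟩) <;> [exact y.2 h2; exact x.2 h1]
      · rw [fsub_coe, fsub_coe]; exact ho2
    · have hyu : y.1 ≠ u := fun hc => hxy1 (hx.trans hc.symm)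
      refine Or.inr (Or.inl ⟨hx, lifto_eq.2 ⟨⟨h, ?_⟩, ?_⟩⟩)
      · rintro (⟨h1, h2⟩ | ⟨h1, h2⟩) <;> [exact hne h1.symm; exact hyu h2]
      · rw [fsub_v, fsub_coe,
          show (⟨u, hne⟩ : {x : V // x ≠ v}) = x from Subtype.ext hx.symm]
        exact ho2
    · have hxu : x.1 ≠ u := fun hc => hxy1 (hc.trans hy.symm)
      refine Or.inr (Or.inr ⟨hy, lifto_eq.2 ⟨⟨h, ?_⟩, ?_⟩⟩)
      · rintro (⟨h1, h2⟩ | ⟨h1, h2⟩) <;> [exact hxu h1; exact x.2 h1]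
      · rw [fsub_v, fsub_coe,
          show (⟨u, hne⟩ : {x : V // x ≠ v}) = y from Subtype.ext hy.symm]
        exact ho2

lemma cardB (huv : G.Adj u v) :
    (Finset.univ.filter fun o : V → V → Bool =>
      IsO (Gdel G u v) o ∧ ¬ TransGen (fun a b => o a b = true) v u ∧
        ¬ TransGen (fun a b => o a b = true) u v).card =
    ac {x : V // x ≠ v} (Gcon G u v) := by
  unfold ac
  apply Finset.card_bij' (i := fun o _ => conto o u v)
    (j := fun o _ => lifto G u v (G.ne_of_adj huv) o)
  · intro o ho
    simp only [mem_filter, mem_univ, true_and] at ho ⊢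
    exact conto_mem huv ho.1 ho.2.1 ho.2.2
  · intro o ho
    simp only [mem_filter, mem_univ, true_and] at ho ⊢
    exact lifto_mem huv ho
  · intro o ho
    simp only [mem_filter, mem_univ, true_and] at ho
    exact lifto_conto huv ho.1 ho.2.1 ho.2.2
  · intro o ho
    simp only [mem_filter, mem_univ, true_and] at ho
    exact conto_lifto huv ho

end

section
variable {V : Type} [Fintype V] [DecidableEq V] {G : SimpleGraph V} {u v : V}

lemma ac_split (huv : G.Adj u v) :
    ac V G = ac V (Gdel G u v) + ac {x : V // x ≠ v} (Gcon G u v) := by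
  classical
  -- split acyclic orientations of G according to the direction of uv
  have hsplit := Finset.card_filter_add_card_filter_not
    (s := (Finset.univ.filter fun o : V → V → Bool => IsO G o))
    (p := fun o : V → V → Bool => o u v = true)
  rw [Finset.filter_filter, Finset.filter_filter] at hsplit
  have hneg : (Finset.univ.filter fun o : V → V → Bool => IsO G o ∧ ¬ o u v = true) =
      (Finset.univ.filter fun o : V → V → Bool => IsO G o ∧ o v u = true) := by
    apply Finset.filter_congr
    intro o _
    constructor
    · rintro ⟨hIsO, h⟩
      exact ⟨hIsO, not_not.1 ((not_iff_not.2 (hIsO.2.1 u v huv)).1 h)⟩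
    · rintro ⟨hIsO, h⟩
      exact ⟨hIsO, fun hc => ((hIsO.2.1 u v huv).1 hc) h⟩
  rw [hneg] at hsplit
  -- identify the two halves
  have h1 := cardAplus (G := G) (u := u) (v := v) huv
  have h2 := cardAplus (G := G) (u := v) (v := u) huv.symm
  rw [← Gdel_comm] at h2
  -- X and Y
  set X := (Finset.univ.filter fun o : V → V → Bool =>
    IsO (Gdel G u v) o ∧ ¬ TransGen (fun a b => o a b = true) v u) with hX
  set Y := (Finset.univ.filter fun o : V → V → Bool =>
    IsO (Gdel G u v) o ∧ ¬ TransGen (fun a b => o a b = true) u v) with hY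
  have hunion : X ∪ Y = (Finset.univ.filter fun o : V → V → Bool => IsO (Gdel G u v) o) := by
    rw [hX, hY, ← Finset.filter_or]
    apply Finset.filter_congr
    intro o _
    constructor
    · rintro (⟨h, -⟩ | ⟨h, -⟩) <;> exact h
    · intro h
      by_cases hvu : TransGen (fun a b => o a b = true) v u
      · refine Or.inr ⟨h, fun huv' => h.2.2 u (huv'.trans hvu)⟩
      · exact Or.inl ⟨h, hvu⟩
  have hinter : X ∩ Y = (Finset.univ.filter fun o : V → V → Bool =>
      IsO (Gdel G u v) o ∧ ¬ TransGen (fun a b => o a b = true) v u ∧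
        ¬ TransGen (fun a b => o a b = true) u v) := by
    rw [hX, hY, ← Finset.filter_and]
    apply Finset.filter_congr
    intro o _
    tauto
  have hcards := Finset.card_union_add_card_inter X Y
  rw [hunion, hinter, cardB huv] at hcards
  have hgoal : (Finset.univ.filter fun o : V → V → Bool => IsO G o).card =
      (Finset.univ.filter fun o : V → V → Bool => IsO (Gdel G u v) o).card +
      ac {x : V // x ≠ v} (Gcon G u v) := by
    rw [hcards, ← h1, ← h2]
    exact hsplit.symm
  exact hgoal

end

section
variable {V : Type} [Fintype V] [DecidableEq V] {G : SimpleGraph V}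

lemma pc_bot (h : ∀ a b : V, ¬ G.Adj a b) (k : ℕ) : pc V G k = k ^ Fintype.card V := by
  unfold pc
  rw [Finset.filter_true_of_mem (fun f _ => fun a b hab => absurd hab (h a b))]
  rw [Finset.card_univ, Fintype.card_fun, Fintype.card_fin]

lemma ac_bot (h : ∀ a b : V, ¬ G.Adj a b) : ac V G = 1 := by
  unfold ac
  have : (Finset.univ.filter fun o : V → V → Bool => IsO G o) =
      {fun _ _ => false} := by
    apply Finset.ext
    intro o
    simp only [mem_filter, mem_univ, true_and, Finset.mem_singleton]
    constructor
    · intro ho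
      funext a b
      exact Bool.eq_false_iff.2 (fun ht => h a b (ho.1 a b ht))
    · rintro rfl
      refine ⟨fun a b hab => by simp at hab, fun a b hab => absurd hab (h a b), fun x hc => ?_⟩
      cases hc with
      | single h' => simp at h'
      | tail _ h' => simp at h'
  rw [this, Finset.card_singleton]

lemma key : ∀ (m : ℕ) (V : Type) [Fintype V] [DecidableEq V] (G : SimpleGraph V),
    ep V G = m →
    ∃ χ : Polynomial ℚ, (∀ k : ℕ, χ.eval (k : ℚ) = pc V G k) ∧
      (-1 : ℚ) ^ (Fintype.card V) * χ.eval (-1) = ac V G := by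
  intro m
  induction m using Nat.strong_induction_on with
  | _ m IH =>
    intro V _ _ G hm
    by_cases hE : ∃ a b : V, G.Adj a b
    · obtain ⟨u, v, huv⟩ := hE
      obtain ⟨χ₁, hχ₁, hA₁⟩ := IH (ep V (Gdel G u v)) (hm ▸ ep_del_lt G u v huv)
        V (Gdel G u v) rfl
      obtain ⟨χ₂, hχ₂, hA₂⟩ := IH (ep {x : V // x ≠ v} (Gcon G u v))
        (hm ▸ lt_of_le_of_lt (ep_con_le G u v huv) (ep_del_lt G u v huv))
        {x : V // x ≠ v} (Gcon G u v) rfl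
      refine ⟨χ₁ - χ₂, ?_, ?_⟩
      · intro k
        have hpc := pc_split G u v huv k
        have hq : (pc V (Gdel G u v) k : ℚ) =
            (pc V G k : ℚ) + (pc {x : V // x ≠ v} (Gcon G u v) k : ℚ) := by
          exact_mod_cast hpc
        rw [Polynomial.eval_sub, hχ₁ k, hχ₂ k]
        linarith
      · have hcard : Fintype.card {x : V // x ≠ v} = Fintype.card V - 1 := by
          have h2 := Fintype.card_subtype_compl (fun x : V => x = v)
          rw [Fintype.card_subtype_eq] at h2
          exact h2
        have hpos : 1 ≤ Fintype.card V := Fintype.card_pos_iff.2 ⟨u⟩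
        have hac := ac_split (G := G) (u := u) (v := v) huv
        have hsign : (-1 : ℚ) ^ (Fintype.card V) = -(-1 : ℚ) ^ (Fintype.card V - 1) := by
          conv_lhs => rw [show Fintype.card V = (Fintype.card V - 1) + 1 from
            (Nat.succ_pred_eq_of_pos hpos).symm]
          rw [pow_succ]
          ring
        rw [hcard] at hA₂
        rw [Polynomial.eval_sub, hac]
        push_cast
        linear_combination hA₁ + hA₂ - Polynomial.eval (-1 : ℚ) χ₂ * hsign
    · push_neg at hE
      refine ⟨Polynomial.X ^ (Fintype.card V), ?_, ?_⟩
      · intro k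
        rw [pc_bot hE k]
        push_cast
        simp
      · rw [ac_bot hE]
        simp only [Polynomial.eval_pow, Polynomial.eval_X]
        rw [← mul_pow]
        norm_num

end
end StanleyAO

/-- **Stanley's acyclic orientation theorem** : if `χ ∈ ℚ[X]` is the chromatic
polynomial of a finite simple graph `G` with `n` vertices (so `χ(k)` is the number
of proper colorings of `G` with colors `{1,…,k}` for every natural `k`), then
`(-1)^n χ(-1)` is the number of acyclic orientations of `G`. Orientations are
encoded as Boolean relations `o` supported on the adjacency relation, choosing
exactly one direction for each edge; acyclicity says there is no directed cycle. -/
theorem acyclic_orientations (V : Type) [Fintype V] [DecidableEq V]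
    (G : SimpleGraph V) (n : ℕ) (hn : Fintype.card V = n) (χ : Polynomial ℚ)
    (hχ : ∀ k : ℕ, χ.eval (k : ℚ) =
      ((Finset.univ.filter fun f : V → Fin k =>
          ∀ u v : V, G.Adj u v → f u ≠ f v).card : ℚ)) :
    (-1 : ℚ) ^ n * χ.eval (-1) =
      ((Finset.univ.filter fun o : V → V → Bool =>
          (∀ u v : V, o u v = true → G.Adj u v) ∧
          (∀ u v : V, G.Adj u v → (o u v = true ↔ ¬ o v u = true)) ∧
          (∀ v : V, ¬ Relation.TransGen (fun a b : V => o a b = true) v v)).card : ℚ) := by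
  subst hn
  obtain ⟨χ₀, hχ₀, hA⟩ := StanleyAO.key (StanleyAO.ep V G) V G rfl
  have hEq : χ = χ₀ := by
    apply Polynomial.eq_of_infinite_eval_eq
    apply Set.infinite_of_injective_forall_mem (f := fun k : ℕ => (k : ℚ))
    · exact fun a b h => Nat.cast_injective h
    · intro k
      show χ.eval (k : ℚ) = χ₀.eval (k : ℚ)
      rw [hχ k, hχ₀ k]
      rfl
  rw [hEq]
  have hfin : StanleyAO.ac V G =
      ((Finset.univ.filter fun o : V → V → Bool =>
          (∀ u v : V, o u v = true → G.Adj u v) ∧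
          (∀ u v : V, G.Adj u v → (o u v = true ↔ ¬ o v u = true)) ∧
          (∀ v : V, ¬ Relation.TransGen (fun a b : V => o a b = true) v v)).card) := by
    unfold StanleyAO.ac StanleyAO.IsO
    congr
  rw [← hfin]
  exact hA
end

section
/- Let (P, ⪯) be a finite poset with p elements and let ω₁, ω₂ : P → [p] be bijections (labelings) that are equivalent, i.e. for every covering pair X ⋖ Y in P, ω₁(X) < ω₁(Y) if and only if ω₂(X) < ω₂(Y). Then for every subset S ⊆ [p−1], β(P, ω₁; S) = β(P, ω₂; S). -/
open scoped Classical

/-- `β(P, ω; S)` : the number of linear extensions `e : [p] → P` whose descent set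
with respect to the labeling `ω` equals `S` (1-based positions). -/
noncomputable def betaCount (α : Type) [PartialOrder α] [Fintype α] (p : ℕ)
    (ω : α ≃ Fin p) (S : Finset ℕ) : ℕ :=
  (Finset.univ.filter (fun e : Fin p ≃ α =>
      (∀ i j : Fin p, e i < e j → i < j) ∧
      desSet p (fun k => ((ω (e k) : ℕ))) = S)).card

section Helpers

variable {α : Type} [PartialOrder α] [Fintype α] [DecidableEq α] {p : ℕ}

lemma myswap_lt {A B u v : Fin p} (hAB : (A : ℕ) + 1 = (B : ℕ))
    (h1 : ¬(u = A ∧ v = B)) (h2 : ¬(u = B ∧ v = A)) :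
    Equiv.swap A B u < Equiv.swap A B v ↔ u < v := by
  have hne : ∀ {w z : Fin p}, w ≠ z → (w : ℕ) ≠ (z : ℕ) := fun h hh => h (Fin.ext hh)
  have hval : ∀ {w z : Fin p}, w = z → (w : ℕ) = (z : ℕ) := fun h => by rw [h]
  rcases eq_or_ne u A with hu | hu
  · rw [hu, Equiv.swap_apply_left]
    rcases eq_or_ne v A with hv | hv
    · rw [hv, Equiv.swap_apply_left, Fin.lt_def, Fin.lt_def]
      have := hval hu; have := hval hv; omega
    rcases eq_or_ne v B with hv' | hv'
    · exact absurd ⟨hu, hv'⟩ h1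
    · rw [Equiv.swap_apply_of_ne_of_ne hv hv', Fin.lt_def, Fin.lt_def]
      have := hval hu; have := hne hv; have := hne hv'; omega
  rcases eq_or_ne u B with hu' | hu'
  · rw [hu', Equiv.swap_apply_right]
    rcases eq_or_ne v A with hv | hv
    · exact absurd ⟨hu', hv⟩ h2
    rcases eq_or_ne v B with hv' | hv'
    · rw [hv', Equiv.swap_apply_right, Fin.lt_def, Fin.lt_def]
      have := hval hu'; have := hval hv'; omega
    · rw [Equiv.swap_apply_of_ne_of_ne hv hv', Fin.lt_def, Fin.lt_def]
      have := hval hu'; have := hne hv; have := hne hv'; omega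
  · rw [Equiv.swap_apply_of_ne_of_ne hu hu']
    have := hne hu; have := hne hu'
    rcases eq_or_ne v A with hv | hv
    · rw [hv, Equiv.swap_apply_left, Fin.lt_def, Fin.lt_def]
      have := hval hv; omega
    rcases eq_or_ne v B with hv' | hv'
    · rw [hv', Equiv.swap_apply_right, Fin.lt_def, Fin.lt_def]
      have := hval hv'; omega
    · rw [Equiv.swap_apply_of_ne_of_ne hv hv']

lemma equiv_swap_comm {β : Type*} [DecidableEq β] (f : α ≃ β) (x y z : α) :
    f (Equiv.swap x y z) = Equiv.swap (f x) (f y) (f z) := by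
  rcases eq_or_ne z x with rfl | hzx
  · simp
  rcases eq_or_ne z y with rfl | hzy
  · simp
  rw [Equiv.swap_apply_of_ne_of_ne hzx hzy,
    Equiv.swap_apply_of_ne_of_ne (f.injective.ne hzx) (f.injective.ne hzy)]

lemma cover_of_adjacent {e : Fin p ≃ α} (he : ∀ i j : Fin p, e i < e j → i < j)
    {i j : Fin p} (hij : (i : ℕ) + 1 = (j : ℕ)) (hlt : e i < e j) : e i ⋖ e j := by
  refine ⟨hlt, fun z hz1 hz2 => ?_⟩
  have h1 : i < e.symm z := he i (e.symm z) (by simpa using hz1)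
  have h2 : e.symm z < j := he (e.symm z) j (by simpa using hz2)
  rw [Fin.lt_def] at h1 h2
  omega

lemma desSet_congr_of_lt_iff {f g : Fin p → ℕ}
    (h : ∀ (i : ℕ) (h1 : i - 1 < p) (h2 : i < p), 1 ≤ i →
      (f ⟨i, h2⟩ < f ⟨i - 1, h1⟩ ↔ g ⟨i, h2⟩ < g ⟨i - 1, h1⟩)) :
    desSet p f = desSet p g := by
  unfold desSet
  apply Finset.filter_congr
  intro i hi
  rw [Finset.mem_Ico] at hi
  constructor
  · rintro ⟨h1, h2, hlt⟩; exact ⟨h1, h2, (h i h1 h2 hi.1).1 hlt⟩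
  · rintro ⟨h1, h2, hlt⟩; exact ⟨h1, h2, (h i h1 h2 hi.1).2 hlt⟩

lemma linext_swap {e : Fin p ≃ α} {X Y : α}
    (he : ∀ i j : Fin p, e i < e j → i < j)
    (hnXY : ¬ X < Y) (hnYX : ¬ Y < X)
    (hadj : ((e.symm X : ℕ) + 1 = (e.symm Y : ℕ) ∨ (e.symm Y : ℕ) + 1 = (e.symm X : ℕ))) :
    ∀ i j : Fin p, (e.trans (Equiv.swap X Y)) i < (e.trans (Equiv.swap X Y)) j → i < j := by
  intro i j hij
  simp only [Equiv.trans_apply] at hij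
  by_cases hiX : e i = X
  · have hi : i = e.symm X := by rw [← hiX, Equiv.symm_apply_apply]
    rw [hiX, Equiv.swap_apply_left] at hij
    by_cases hjX : e j = X
    · rw [hjX, Equiv.swap_apply_left] at hij; exact absurd hij (lt_irrefl _)
    by_cases hjY : e j = Y
    · rw [hjY, Equiv.swap_apply_right] at hij; exact absurd hij hnYX
    · rw [Equiv.swap_apply_of_ne_of_ne hjX hjY] at hij
      have h1 : e.symm Y < j := he _ _ (by rwa [Equiv.apply_symm_apply])
      have h2 : (j : ℕ) ≠ (e.symm X : ℕ) := fun hh =>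
        hjX (by rw [show j = e.symm X from Fin.ext hh, Equiv.apply_symm_apply])
      have hi' : (i : ℕ) = (e.symm X : ℕ) := by rw [hi]
      rw [Fin.lt_def] at h1 ⊢
      rcases hadj with h | h <;> omega
  by_cases hiY : e i = Y
  · have hi : i = e.symm Y := by rw [← hiY, Equiv.symm_apply_apply]
    rw [hiY, Equiv.swap_apply_right] at hij
    by_cases hjX : e j = X
    · rw [hjX, Equiv.swap_apply_left] at hij; exact absurd hij hnXY
    by_cases hjY : e j = Y
    · rw [hjY, Equiv.swap_apply_right] at hij; exact absurd hij (lt_irrefl _)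
    · rw [Equiv.swap_apply_of_ne_of_ne hjX hjY] at hij
      have h1 : e.symm X < j := he _ _ (by rwa [Equiv.apply_symm_apply])
      have h2 : (j : ℕ) ≠ (e.symm Y : ℕ) := fun hh =>
        hjY (by rw [show j = e.symm Y from Fin.ext hh, Equiv.apply_symm_apply])
      have hi' : (i : ℕ) = (e.symm Y : ℕ) := by rw [hi]
      rw [Fin.lt_def] at h1 ⊢
      rcases hadj with h | h <;> omega
  · rw [Equiv.swap_apply_of_ne_of_ne hiX hiY] at hij
    by_cases hjX : e j = X
    · have hj : j = e.symm X := by rw [← hjX, Equiv.symm_apply_apply]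
      rw [hjX, Equiv.swap_apply_left] at hij
      have h1 : i < e.symm Y := he _ _ (by rwa [Equiv.apply_symm_apply])
      have h2 : (i : ℕ) ≠ (e.symm X : ℕ) := fun hh =>
        hiX (by rw [show i = e.symm X from Fin.ext hh, Equiv.apply_symm_apply])
      have hj' : (j : ℕ) = (e.symm X : ℕ) := by rw [hj]
      rw [Fin.lt_def] at h1 ⊢
      rcases hadj with h | h <;> omega
    by_cases hjY : e j = Y
    · have hj : j = e.symm Y := by rw [← hjY, Equiv.symm_apply_apply]
      rw [hjY, Equiv.swap_apply_right] at hij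
      have h1 : i < e.symm X := he _ _ (by rwa [Equiv.apply_symm_apply])
      have h2 : (i : ℕ) ≠ (e.symm Y : ℕ) := fun hh =>
        hiY (by rw [show i = e.symm Y from Fin.ext hh, Equiv.apply_symm_apply])
      have hj' : (j : ℕ) = (e.symm Y : ℕ) := by rw [hj]
      rw [Fin.lt_def] at h1 ⊢
      rcases hadj with h | h <;> omega
    · rw [Equiv.swap_apply_of_ne_of_ne hjX hjY] at hij
      exact he _ _ hij

noncomputable def Phi (X Y : α) (e : Fin p ≃ α) : Fin p ≃ α :=
  if ((e.symm X : ℕ) + 1 = (e.symm Y : ℕ) ∨ (e.symm Y : ℕ) + 1 = (e.symm X : ℕ)) then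
    e.trans (Equiv.swap X Y)
  else e

lemma Phi_invol (X Y : α) (e : Fin p ≃ α) : Phi X Y (Phi X Y e) = e := by
  by_cases h : ((e.symm X : ℕ) + 1 = (e.symm Y : ℕ) ∨ (e.symm Y : ℕ) + 1 = (e.symm X : ℕ))
  · have h1 : Phi X Y e = e.trans (Equiv.swap X Y) := if_pos h
    have hsX : (e.trans (Equiv.swap X Y)).symm X = e.symm Y := by
      simp [Equiv.symm_trans_apply]
    have hsY : (e.trans (Equiv.swap X Y)).symm Y = e.symm X := by
      simp [Equiv.symm_trans_apply]
    have h2 : Phi X Y (e.trans (Equiv.swap X Y)) =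
        (e.trans (Equiv.swap X Y)).trans (Equiv.swap X Y) := by
      apply if_pos
      rw [hsX, hsY]
      exact h.symm
    rw [h1, h2]
    ext k
    simp [Equiv.trans_apply, Equiv.swap_apply_self]
  · have h1 : Phi X Y e = e := if_neg h
    rw [h1, h1]

lemma beta_swap_le (ω : α ≃ Fin p) {A B : Fin p} (hAB : (A : ℕ) + 1 = (B : ℕ))
    (hnc1 : ¬(ω.symm A ⋖ ω.symm B)) (hnc2 : ¬(ω.symm B ⋖ ω.symm A)) (S : Finset ℕ) :
    betaCount α p (ω.trans (Equiv.swap A B)) S ≤ betaCount α p ω S := by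
  set X := ω.symm A with hX
  set Y := ω.symm B with hY
  have hωX : ω X = A := by rw [hX, Equiv.apply_symm_apply]
  have hωY : ω Y = B := by rw [hY, Equiv.apply_symm_apply]
  unfold betaCount
  apply Finset.card_le_card_of_injOn (Phi X Y)
  · intro e he
    simp only [Finset.mem_coe, Finset.mem_filter, Finset.mem_univ, true_and] at he ⊢
    obtain ⟨he1, he2⟩ := he
    by_cases h : ((e.symm X : ℕ) + 1 = (e.symm Y : ℕ) ∨ (e.symm Y : ℕ) + 1 = (e.symm X : ℕ))
    · -- X, Y adjacent in e; they must be incomparable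
      have hnXY : ¬ X < Y := by
        intro hlt
        rcases h with hadj | hadj
        · have hc := cover_of_adjacent he1 hadj
            (show e (e.symm X) < e (e.symm Y) by simpa using hlt)
          rw [Equiv.apply_symm_apply, Equiv.apply_symm_apply] at hc
          exact hnc1 hc
        · have hpos := he1 (e.symm X) (e.symm Y) (by simpa using hlt)
          rw [Fin.lt_def] at hpos; omega
      have hnYX : ¬ Y < X := by
        intro hlt
        rcases h with hadj | hadj
        · have hpos := he1 (e.symm Y) (e.symm X) (by simpa using hlt)
          rw [Fin.lt_def] at hpos; omega
        · have hc := cover_of_adjacent he1 hadj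
            (show e (e.symm Y) < e (e.symm X) by simpa using hlt)
          rw [Equiv.apply_symm_apply, Equiv.apply_symm_apply] at hc
          exact hnc2 hc
      have hPhi : Phi X Y e = e.trans (Equiv.swap X Y) := if_pos h
      rw [hPhi]
      refine ⟨linext_swap he1 hnXY hnYX h, ?_⟩
      have hpt : (fun k => ((ω.trans (Equiv.swap A B)) (e k) : ℕ)) =
          fun k => ((ω ((e.trans (Equiv.swap X Y)) k)) : ℕ) := by
        funext k
        simp only [Equiv.trans_apply]
        rw [equiv_swap_comm ω X Y (e k), hωX, hωY]
      rw [← hpt]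
      exact he2
    · have hPhi : Phi X Y e = e := if_neg h
      rw [hPhi]
      refine ⟨he1, ?_⟩
      rw [← he2]
      apply desSet_congr_of_lt_iff
      intro i h1 h2 hge
      simp only [Equiv.trans_apply]
      have hne1 : ¬(ω (e ⟨i, h2⟩) = A ∧ ω (e ⟨i - 1, h1⟩) = B) := by
        rintro ⟨ha, hb⟩
        apply h
        have e1 : e.symm X = ⟨i, h2⟩ := by
          rw [show X = e ⟨i, h2⟩ from by rw [hX, ← ha, Equiv.symm_apply_apply],
            Equiv.symm_apply_apply]
        have e2 : e.symm Y = ⟨i - 1, h1⟩ := by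
          rw [show Y = e ⟨i - 1, h1⟩ from by rw [hY, ← hb, Equiv.symm_apply_apply],
            Equiv.symm_apply_apply]
        right
        rw [e1, e2]
        simp only []
        omega
      have hne2 : ¬(ω (e ⟨i, h2⟩) = B ∧ ω (e ⟨i - 1, h1⟩) = A) := by
        rintro ⟨ha, hb⟩
        apply h
        have e1 : e.symm Y = ⟨i, h2⟩ := by
          rw [show Y = e ⟨i, h2⟩ from by rw [hY, ← ha, Equiv.symm_apply_apply],
            Equiv.symm_apply_apply]
        have e2 : e.symm X = ⟨i - 1, h1⟩ := by
          rw [show X = e ⟨i - 1, h1⟩ from by rw [hX, ← hb, Equiv.symm_apply_apply],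
            Equiv.symm_apply_apply]
        left
        rw [e1, e2]
        simp only []
        omega
      have := (myswap_lt hAB hne1 hne2).symm
      rw [Fin.lt_def, Fin.lt_def] at this
      exact this
  · intro e1 _ e2 _ heq
    rw [← Phi_invol X Y e1, heq, Phi_invol X Y e2]

lemma beta_swap_eq (ω : α ≃ Fin p) {A B : Fin p} (hAB : (A : ℕ) + 1 = (B : ℕ))
    (hnc1 : ¬(ω.symm A ⋖ ω.symm B)) (hnc2 : ¬(ω.symm B ⋖ ω.symm A)) (S : Finset ℕ) :
    betaCount α p (ω.trans (Equiv.swap A B)) S = betaCount α p ω S := by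
  refine le_antisymm (beta_swap_le ω hAB hnc1 hnc2 S) ?_
  have hA : (ω.trans (Equiv.swap A B)).symm A = ω.symm B := by
    simp [Equiv.symm_trans_apply]
  have hB : (ω.trans (Equiv.swap A B)).symm B = ω.symm A := by
    simp [Equiv.symm_trans_apply]
  have h2 := beta_swap_le (ω.trans (Equiv.swap A B)) hAB
    (by rw [hA, hB]; exact hnc2) (by rw [hA, hB]; exact hnc1) S
  have hω : (ω.trans (Equiv.swap A B)).trans (Equiv.swap A B) = ω := by
    ext z
    simp [Equiv.trans_apply, Equiv.swap_apply_self]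
  rwa [hω] at h2

noncomputable def invSet (ω₁ ω₂ : α ≃ Fin p) : Finset (Fin p × Fin p) :=
  Finset.univ.filter fun x => x.1 < x.2 ∧ ω₂ (ω₁.symm x.2) < ω₂ (ω₁.symm x.1)

lemma inv_card_lt (ω₁ ω₂ : α ≃ Fin p) {A B : Fin p} (hAB : (A : ℕ) + 1 = (B : ℕ))
    (hdesc : ω₂ (ω₁.symm B) < ω₂ (ω₁.symm A)) :
    (invSet (ω₁.trans (Equiv.swap A B)) ω₂).card < (invSet ω₁ ω₂).card := by
  have hmem : (A, B) ∈ invSet ω₁ ω₂ := by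
    simp only [invSet, Finset.mem_filter, Finset.mem_univ, true_and]
    exact ⟨Fin.lt_def.2 (by omega), hdesc⟩
  have key : ∀ x ∈ invSet (ω₁.trans (Equiv.swap A B)) ω₂,
      (Equiv.swap A B x.1, Equiv.swap A B x.2) ∈ (invSet ω₁ ω₂).erase (A, B) := by
    rintro ⟨i, j⟩ hx
    simp only [invSet, Finset.mem_filter, Finset.mem_univ, true_and] at hx
    obtain ⟨hlt, hval⟩ := hx
    have hvals : ω₂ (ω₁.symm (Equiv.swap A B j)) < ω₂ (ω₁.symm (Equiv.swap A B i)) := by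
      simpa [Equiv.symm_trans_apply, Equiv.symm_swap] using hval
    have hne : ¬(i = A ∧ j = B) := by
      rintro ⟨rfl, rfl⟩
      rw [Equiv.swap_apply_left, Equiv.swap_apply_right] at hvals
      exact absurd hvals hdesc.asymm
    have hne2 : ¬(i = B ∧ j = A) := by
      rintro ⟨rfl, rfl⟩
      rw [Fin.lt_def] at hlt
      omega
    rw [Finset.mem_erase]
    constructor
    · intro hh
      rw [Prod.ext_iff] at hh
      obtain ⟨ha, hb⟩ := hh
      have hiB : i = B := by
        have := congrArg (Equiv.swap A B) ha
        rwa [Equiv.swap_apply_self, Equiv.swap_apply_left] at this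
      have hjA : j = A := by
        have := congrArg (Equiv.swap A B) hb
        rwa [Equiv.swap_apply_self, Equiv.swap_apply_right] at this
      exact hne2 ⟨hiB, hjA⟩
    · simp only [invSet, Finset.mem_filter, Finset.mem_univ, true_and]
      exact ⟨(myswap_lt hAB hne hne2).2 hlt, hvals⟩
  have hinj : Set.InjOn (fun x : Fin p × Fin p => (Equiv.swap A B x.1, Equiv.swap A B x.2))
      (invSet (ω₁.trans (Equiv.swap A B)) ω₂) := by
    intro x _ y _ hxy
    simp only [Prod.ext_iff, (Equiv.swap A B).injective.eq_iff] at hxy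
    exact Prod.ext hxy.1 hxy.2
  calc (invSet (ω₁.trans (Equiv.swap A B)) ω₂).card
      ≤ ((invSet ω₁ ω₂).erase (A, B)).card := Finset.card_le_card_of_injOn _ key hinj
    _ < (invSet ω₁ ω₂).card := Finset.card_erase_lt_of_mem hmem

lemma eq_of_no_adj (hp : 0 < p) (ω₁ ω₂ : α ≃ Fin p)
    (hD : ∀ (i : Fin p) (hi : (i : ℕ) + 1 < p),
      ¬ ω₂ (ω₁.symm ⟨(i : ℕ) + 1, hi⟩) < ω₂ (ω₁.symm i)) :
    ω₁ = ω₂ := by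
  obtain ⟨n, rfl⟩ : ∃ n, p = n + 1 := ⟨p - 1, by omega⟩
  set f : Fin (n + 1) → Fin (n + 1) := fun i => ω₂ (ω₁.symm i) with hf
  have hmono : StrictMono f := by
    rw [Fin.strictMono_iff_lt_succ]
    intro i
    have hi : ((Fin.castSucc i : Fin (n + 1)) : ℕ) + 1 < n + 1 := by
      simp only [Fin.coe_castSucc]
      omega
    have h1 := hD (Fin.castSucc i) hi
    have hsucc : (⟨((Fin.castSucc i : Fin (n + 1)) : ℕ) + 1, hi⟩ : Fin (n + 1)) = i.succ := by
      ext
      simp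
    rw [hsucc] at h1
    have hne : f (Fin.castSucc i) ≠ f i.succ := by
      intro hh
      have heq := ω₁.symm.injective (ω₂.injective hh)
      have hv := congrArg Fin.val heq
      simp only [Fin.coe_castSucc, Fin.val_succ] at hv
      omega
    exact lt_of_le_of_ne (not_lt.1 h1) hne
  have hsurj : Set.range f = Set.range (id : Fin (n + 1) → Fin (n + 1)) := by
    rw [Set.range_id]
    apply Set.range_eq_univ.2
    intro y
    exact ⟨ω₁ (ω₂.symm y), by simp [hf]⟩
  haveI : WellFoundedLT (Fin (n + 1)) := inferInstance
  have hid : f = id :=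
    (StrictMono.range_inj (β := Fin (n + 1)) (γ := Fin (n + 1)) hmono strictMono_id).1 hsurj
  apply Equiv.ext
  intro z
  have := congrFun hid (ω₁ z)
  simp only [hf, Equiv.symm_apply_apply, id_eq] at this
  exact this.symm

end Helpers

/-- If two labelings `ω₁, ω₂` of a finite poset `P` are equivalent — i.e. they agree
in orientation on every covering pair — then `β(P, ω₁; S) = β(P, ω₂; S)` for every
`S ⊆ [p-1]`. -/

theorem beta_equivalent_labelings (α : Type) [PartialOrder α] [Fintype α]
    [DecidableEq α] (p : ℕ) (hp : 0 < p) (hcard : Fintype.card α = p)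
    (ω₁ ω₂ : α ≃ Fin p)
    (hequiv : ∀ X Y : α, X ⋖ Y → ((ω₁ X : ℕ) < (ω₁ Y : ℕ) ↔ (ω₂ X : ℕ) < (ω₂ Y : ℕ)))
    (S : Finset ℕ) (hS : S ⊆ Finset.Ico 1 p) :
    betaCount α p ω₁ S = betaCount α p ω₂ S := by
  suffices H : ∀ (n : ℕ) (ω : α ≃ Fin p), (invSet ω ω₂).card ≤ n →
      (∀ X Y : α, X ⋖ Y → ((ω X : ℕ) < (ω Y : ℕ) ↔ (ω₂ X : ℕ) < (ω₂ Y : ℕ))) →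
      betaCount α p ω S = betaCount α p ω₂ S by
    exact H _ ω₁ le_rfl hequiv
  intro n
  induction n with
  | zero =>
    intro ω hc heq
    have hD : ∀ (i : Fin p) (hi : (i : ℕ) + 1 < p),
        ¬ ω₂ (ω.symm ⟨(i : ℕ) + 1, hi⟩) < ω₂ (ω.symm i) := by
      intro i hi hcon
      have hmem : (i, (⟨(i : ℕ) + 1, hi⟩ : Fin p)) ∈ invSet ω ω₂ := by
        simp only [invSet, Finset.mem_filter, Finset.mem_univ, true_and]
        exact ⟨Fin.lt_def.2 (Nat.lt_succ_self _), hcon⟩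
      rw [Finset.card_eq_zero.1 (Nat.le_zero.1 hc)] at hmem
      exact absurd hmem (Finset.notMem_empty _)
    rw [eq_of_no_adj hp ω ω₂ hD]
  | succ n ih =>
    intro ω hc heq
    by_cases hD : ∃ (i : Fin p) (hi : (i : ℕ) + 1 < p),
        ω₂ (ω.symm ⟨(i : ℕ) + 1, hi⟩) < ω₂ (ω.symm i)
    · obtain ⟨A, hi, hdesc⟩ := hD
      set B : Fin p := ⟨(A : ℕ) + 1, hi⟩ with hB
      have hAB : (A : ℕ) + 1 = (B : ℕ) := rfl
      have hωA : (ω (ω.symm A) : ℕ) = (A : ℕ) := by rw [Equiv.apply_symm_apply]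
      have hωB : (ω (ω.symm B) : ℕ) = (B : ℕ) := by rw [Equiv.apply_symm_apply]
      have hnc1 : ¬(ω.symm A ⋖ ω.symm B) := by
        intro hcov
        have h' := (heq _ _ hcov).1 (by rw [hωA, hωB]; omega)
        rw [Fin.lt_def] at hdesc
        omega
      have hnc2 : ¬(ω.symm B ⋖ ω.symm A) := by
        intro hcov
        have h' := (heq _ _ hcov).2 (by rw [Fin.lt_def] at hdesc; exact hdesc)
        rw [hωA, hωB] at h'
        omega
      have hbeta : betaCount α p (ω.trans (Equiv.swap A B)) S = betaCount α p ω S :=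
        beta_swap_eq ω hAB hnc1 hnc2 S
      have heq' : ∀ X Y : α, X ⋖ Y →
          (((ω.trans (Equiv.swap A B)) X : ℕ) < ((ω.trans (Equiv.swap A B)) Y : ℕ) ↔
            (ω₂ X : ℕ) < (ω₂ Y : ℕ)) := by
        intro U V hUV
        rw [← heq U V hUV]
        simp only [Equiv.trans_apply]
        have hne1 : ¬(ω U = A ∧ ω V = B) := by
          rintro ⟨ha, hb⟩
          apply hnc1
          rwa [show ω.symm A = U from by rw [← ha, Equiv.symm_apply_apply],
            show ω.symm B = V from by rw [← hb, Equiv.symm_apply_apply]]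
        have hne2 : ¬(ω U = B ∧ ω V = A) := by
          rintro ⟨ha, hb⟩
          apply hnc2
          rwa [show ω.symm B = U from by rw [← ha, Equiv.symm_apply_apply],
            show ω.symm A = V from by rw [← hb, Equiv.symm_apply_apply]]
        have := myswap_lt hAB hne1 hne2
        rw [Fin.lt_def, Fin.lt_def] at this
        exact this
      have hcard : (invSet (ω.trans (Equiv.swap A B)) ω₂).card ≤ n := by
        have := inv_card_lt ω ω₂ hAB hdesc
        omega
      rw [← hbeta]
      exact ih (ω.trans (Equiv.swap A B)) hcard heq'
    · push_neg at hD
      rw [eq_of_no_adj hp ω ω₂ (fun i hi => not_lt.2 (hD i hi))]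
end
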